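/- arXiv:2411.07582 — 2 statements merged into one kernel-verified Lean document; each statement's English description precedes it below -/
import Mathlib

section
/- Let Λ be a row-finite k-graph with no sources. Then Λ is cofinal if and only if the talented monoid T_Λ is simple as a ℤ^k-monoid (its only ℤ^k-order ideals are {0} and T_Λ). -/
/-- A (small) `k`-graph: a small category `Λ` with vertex set `V`, path set `P`,
range and source maps `r, s`, a degree functor `d : Λ → ℕᵏ` satisfying the
unique factorization property. -/
structure KGraph (k : ℕ) where
  V : Type
  P : Type
  r : P → V
  s : P → V
  d : P → Fin k → ℕ
  ident : V → P
  comp : (p q : P) → s p = r q → P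
  r_ident : ∀ v, r (ident v) = v
  s_ident : ∀ v, s (ident v) = v
  d_ident : ∀ v, d (ident v) = 0
  r_comp : ∀ p q h, r (comp p q h) = r p
  s_comp : ∀ p q h, s (comp p q h) = s q
  d_comp : ∀ p q h, d (comp p q h) = d p + d q
  ident_comp : ∀ (p : P) (h : s (ident (r p)) = r p), comp (ident (r p)) p h = p
  comp_ident : ∀ (p : P) (h : s p = r (ident (s p))), comp p (ident (s p)) h = p
  comp_assoc : ∀ (p q t : P) (h1 : s p = r q) (h2 : s q = r t)
      (h3 : s (comp p q h1) = r t) (h4 : s p = r (comp q t h2)),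
      comp (comp p q h1) t h3 = comp p (comp q t h2) h4
  factor : ∀ (p : P) (m n : Fin k → ℕ), d p = m + n →
      ∃! qt : P × P, ∃ h : s qt.1 = r qt.2,
        comp qt.1 qt.2 h = p ∧ d qt.1 = m ∧ d qt.2 = n

namespace KGraph

variable {k : ℕ}

/-- `vΛⁿ`, the set of paths with range `v` and degree `n`. -/
def pathsSet (Λ : KGraph k) (v : Λ.V) (n : Fin k → ℕ) : Set Λ.P :=
  {p | Λ.r p = v ∧ Λ.d p = n}

/-- `Λ` is row-finite if every `vΛⁿ` is finite. -/
def RowFinite (Λ : KGraph k) : Prop := ∀ v n, (Λ.pathsSet v n).Finite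

/-- `Λ` has no sources if every `vΛⁿ` is nonempty. -/
def NoSources (Λ : KGraph k) : Prop := ∀ v n, (Λ.pathsSet v n).Nonempty

/-- The element `Σ_{λ ∈ vΛⁿ} s(λ)` of the free commutative monoid `ℕ^(Λ⁰)`. -/
noncomputable def vSum (Λ : KGraph k) (hfin : Λ.RowFinite) (v : Λ.V) (n : Fin k → ℕ) :
    Λ.V →₀ ℕ :=
  ∑ p ∈ (hfin v n).toFinset, Finsupp.single (Λ.s p) 1

end KGraph

namespace KGraph

/-- The free commutative monoid on `Λ⁰ × ℤᵏ`. -/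
abbrev TalF (Λ : KGraph k) : Type := (Λ.V × (Fin k → ℤ)) →₀ ℕ

/-- The defining relations of the talented monoid:
`v(n) = Σ_{α ∈ vΛ^{e_i}} s(α)(n + e_i)`. -/
noncomputable def TalRel (Λ : KGraph k) (hfin : Λ.RowFinite) : TalF Λ → TalF Λ → Prop :=
  fun a b => ∃ (v : Λ.V) (n : Fin k → ℤ) (i : Fin k),
    a = Finsupp.single (v, n) 1 ∧
    b = ∑ p ∈ (hfin v (Pi.single i 1)).toFinset,
          Finsupp.single (Λ.s p, n + Pi.single i 1) 1

/-- The congruence generated by the defining relations of the talented monoid. -/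
noncomputable def TalCon (Λ : KGraph k) (hfin : Λ.RowFinite) : AddCon (TalF Λ) :=
  addConGen (TalRel Λ hfin)

/-- The talented monoid `T_Λ`. -/
abbrev Tal (Λ : KGraph k) (hfin : Λ.RowFinite) : Type := (TalCon Λ hfin).Quotient

/-- The quotient map `ℕ^(Λ⁰ × ℤᵏ) → T_Λ`. -/
noncomputable def tmk (Λ : KGraph k) (hfin : Λ.RowFinite) : TalF Λ → Tal Λ hfin :=
  (TalCon Λ hfin).mk'

/-- Shift of states on the free commutative monoid; it induces the `ℤᵏ`-action on `T_Λ`. -/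
noncomputable def shiftF (Λ : KGraph k) (p : Fin k → ℤ) : TalF Λ → TalF Λ :=
  Finsupp.mapDomain (fun q => (q.1, q.2 + p))

/-- A `ℤᵏ`-order ideal of `T_Λ`: a submonoid, downward closed in the algebraic
preorder, and closed under the `ℤᵏ`-action (expressed on representatives). -/
noncomputable def IsOrderIdeal (Λ : KGraph k) (hfin : Λ.RowFinite)
    (J : Set (Tal Λ hfin)) : Prop :=
  (0 : Tal Λ hfin) ∈ J ∧
  (∀ a b, a ∈ J → b ∈ J → a + b ∈ J) ∧
  (∀ a b : Tal Λ hfin, a + b ∈ J → a ∈ J) ∧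
  (∀ (p : Fin k → ℤ) (a : TalF Λ), tmk Λ hfin a ∈ J → tmk Λ hfin (shiftF Λ p a) ∈ J)

/-- `H ⊆ Λ⁰` is hereditary. -/
def Hereditary (Λ : KGraph k) (H : Set Λ.V) : Prop :=
  ∀ p : Λ.P, Λ.r p ∈ H → Λ.s p ∈ H

/-- `H ⊆ Λ⁰` is saturated. -/
def Saturated (Λ : KGraph k) (H : Set Λ.V) : Prop :=
  ∀ (v : Λ.V) (n : Fin k → ℕ),
    (∀ p : Λ.P, Λ.r p = v → Λ.d p = n → Λ.s p ∈ H) → v ∈ H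

/-- The `ℤᵏ`-order ideal of `T_Λ` generated by a set `X ⊆ Λ⁰` of vertices:
all `x` with `x ≤ Σᵢ ⁿⁱvᵢ` for finitely many `vᵢ ∈ X`, `nᵢ ∈ ℤᵏ`. -/
noncomputable def genIdeal (Λ : KGraph k) (hfin : Λ.RowFinite) (X : Set Λ.V) :
    Set (Tal Λ hfin) :=
  {x | ∃ b : TalF Λ, (∀ q ∈ b.support, q.1 ∈ X) ∧ ∃ z, x + z = tmk Λ hfin b}

end KGraph

namespace KGraph

/-- An infinite path in `Λ`: a degree-preserving functor `Ω_k → Λ`, recorded by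
its vertices `vert n = x(n)` and segments `seg m n = x(m,n)`. -/
structure InfPath (Λ : KGraph k) where
  vert : (Fin k → ℕ) → Λ.V
  seg : (m n : Fin k → ℕ) → m ≤ n → Λ.P
  seg_r : ∀ m n h, Λ.r (seg m n h) = vert m
  seg_s : ∀ m n h, Λ.s (seg m n h) = vert n
  seg_d : ∀ m n h, Λ.d (seg m n h) = n - m
  seg_id : ∀ m, seg m m le_rfl = Λ.ident (vert m)
  seg_comp : ∀ m n p (h1 : m ≤ n) (h2 : n ≤ p)
      (h : Λ.s (seg m n h1) = Λ.r (seg n p h2)),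
      Λ.comp (seg m n h1) (seg n p h2) h = seg m p (h1.trans h2)

/-- `Λ` is cofinal: every vertex connects to every infinite path. -/
def Cofinal (Λ : KGraph k) : Prop :=
  ∀ (x : InfPath Λ) (v : Λ.V), ∃ (n : Fin k → ℕ) (p : Λ.P),
    Λ.r p = v ∧ Λ.s p = x.vert n

/-- An infinite path `x` is aperiodic: `σᵐ x = σⁿ x` implies `m = n`. -/
def AperiodicPath (Λ : KGraph k) (x : InfPath Λ) : Prop :=
  ∀ m n : Fin k → ℕ,
    (∀ (p q : Fin k → ℕ) (h : p ≤ q),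
      x.seg (p + m) (q + m) (add_le_add h le_rfl)
        = x.seg (p + n) (q + n) (add_le_add h le_rfl)) → m = n

end KGraph

namespace KGraph

variable {k : ℕ} (Λ : KGraph k)

/-- The prefix-suffix splitting of a path at degree `m ≤ d p`. -/
noncomputable def split (p : Λ.P) (m : Fin k → ℕ) (h : m ≤ Λ.d p) : Λ.P × Λ.P :=
  (Λ.factor p m (Λ.d p - m) (by funext i; have : m i ≤ Λ.d p i := h i; simp only [Pi.add_apply, Pi.sub_apply]; omega)).choose

lemma split_spec (p : Λ.P) (m : Fin k → ℕ) (h : m ≤ Λ.d p) :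
    ∃ hh : Λ.s (Λ.split p m h).1 = Λ.r (Λ.split p m h).2,
      Λ.comp (Λ.split p m h).1 (Λ.split p m h).2 hh = p ∧
      Λ.d (Λ.split p m h).1 = m ∧ Λ.d (Λ.split p m h).2 = Λ.d p - m :=
  (Λ.factor p m (Λ.d p - m) (by funext i; have : m i ≤ Λ.d p i := h i; simp only [Pi.add_apply, Pi.sub_apply]; omega)).choose_spec.1

lemma split_unique (p : Λ.P) (m : Fin k → ℕ) (h : m ≤ Λ.d p)
    (a b : Λ.P) (hh : Λ.s a = Λ.r b) (hc : Λ.comp a b hh = p) (hd : Λ.d a = m) :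
    Λ.split p m h = (a, b) := by
  have hdb : Λ.d b = Λ.d p - m := by
    have := Λ.d_comp a b hh
    rw [hc, hd] at this
    funext i; have h2 := congrFun this i
    have h3 : m i ≤ Λ.d p i := h i
    simp only [Pi.add_apply, Pi.sub_apply] at h2 ⊢; omega
  have huniq := (Λ.factor p m (Λ.d p - m) (by funext i; have : m i ≤ Λ.d p i := h i; simp only [Pi.add_apply, Pi.sub_apply]; omega)).choose_spec.2
  exact (huniq (a, b) ⟨hh, hc, hd, hdb⟩).symm

noncomputable def pre (p : Λ.P) (m : Fin k → ℕ) (h : m ≤ Λ.d p) : Λ.P := (Λ.split p m h).1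
noncomputable def suf (p : Λ.P) (m : Fin k → ℕ) (h : m ≤ Λ.d p) : Λ.P := (Λ.split p m h).2

lemma pre_suf (p m h) : ∃ hh : Λ.s (Λ.pre p m h) = Λ.r (Λ.suf p m h),
    Λ.comp (Λ.pre p m h) (Λ.suf p m h) hh = p := by
  obtain ⟨hh, hc, -⟩ := Λ.split_spec p m h; exact ⟨hh, hc⟩

lemma s_pre_eq_r_suf (p m h) : Λ.s (Λ.pre p m h) = Λ.r (Λ.suf p m h) :=
  (Λ.pre_suf p m h).choose

lemma d_pre (p m h) : Λ.d (Λ.pre p m h) = m := (Λ.split_spec p m h).choose_spec.2.1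
lemma d_suf (p m h) : Λ.d (Λ.suf p m h) = Λ.d p - m := (Λ.split_spec p m h).choose_spec.2.2

lemma r_pre (p m h) : Λ.r (Λ.pre p m h) = Λ.r p := by
  obtain ⟨hh, hc⟩ := Λ.pre_suf p m h
  conv_rhs => rw [← hc]
  rw [Λ.r_comp]

lemma s_suf (p m h) : Λ.s (Λ.suf p m h) = Λ.s p := by
  obtain ⟨hh, hc⟩ := Λ.pre_suf p m h
  conv_rhs => rw [← hc]
  rw [Λ.s_comp]

lemma pre_unique (p : Λ.P) (m : Fin k → ℕ) (h : m ≤ Λ.d p)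
    (a b : Λ.P) (hh : Λ.s a = Λ.r b) (hc : Λ.comp a b hh = p) (hd : Λ.d a = m) :
    Λ.pre p m h = a ∧ Λ.suf p m h = b := by
  have := Λ.split_unique p m h a b hh hc hd
  constructor
  · exact congrArg Prod.fst this
  · exact congrArg Prod.snd this

/-- Degree zero paths are identities. -/
lemma eq_ident_of_d_eq_zero (p : Λ.P) (h : Λ.d p = 0) : p = Λ.ident (Λ.r p) := by
  have h0 : (0 : Fin k → ℕ) ≤ Λ.d p := by intro i; simp
  have h1 := Λ.pre_unique p 0 h0 (Λ.ident (Λ.r p)) p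
    (by rw [Λ.s_ident]) (Λ.ident_comp p _) (Λ.d_ident _)
  have h2 := Λ.pre_unique p 0 h0 p (Λ.ident (Λ.s p))
    (by rw [Λ.r_ident]) (Λ.comp_ident p _) h
  rw [← h1.1, h2.1]

lemma pre_zero (p : Λ.P) (h : (0:Fin k → ℕ) ≤ Λ.d p) : Λ.pre p 0 h = Λ.ident (Λ.r p) :=
  (Λ.pre_unique p 0 h (Λ.ident (Λ.r p)) p (by rw [Λ.s_ident]) (Λ.ident_comp p _)
    (Λ.d_ident _)).1

lemma suf_zero (p : Λ.P) (h : (0:Fin k → ℕ) ≤ Λ.d p) : Λ.suf p 0 h = p :=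
  (Λ.pre_unique p 0 h (Λ.ident (Λ.r p)) p (by rw [Λ.s_ident]) (Λ.ident_comp p _)
    (Λ.d_ident _)).2

lemma pre_full (p : Λ.P) (h : Λ.d p ≤ Λ.d p) : Λ.pre p (Λ.d p) h = p :=
  (Λ.pre_unique p (Λ.d p) h p (Λ.ident (Λ.s p)) (by rw [Λ.r_ident]) (Λ.comp_ident p _)
    rfl).1

lemma suf_full (p : Λ.P) (h : Λ.d p ≤ Λ.d p) : Λ.suf p (Λ.d p) h = Λ.ident (Λ.s p) :=
  (Λ.pre_unique p (Λ.d p) h p (Λ.ident (Λ.s p)) (by rw [Λ.r_ident]) (Λ.comp_ident p _)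
    rfl).2


lemma comp_heq {a a' b b' : Λ.P} (ha : a = a') (hb : b = b') (h : Λ.s a = Λ.r b)
    (h' : Λ.s a' = Λ.r b') : Λ.comp a b h = Λ.comp a' b' h' := by subst ha; subst hb; rfl

lemma suf_path_congr {p p' : Λ.P} (hp : p = p') (m : Fin k → ℕ) (h : m ≤ Λ.d p)
    (h' : m ≤ Λ.d p') : Λ.suf p m h = Λ.suf p' m h' := by subst hp; rfl

lemma suf_congr (p : Λ.P) (m m' : Fin k → ℕ) (h : m ≤ Λ.d p) (hm : m = m')
    (h' : m' ≤ Λ.d p) : Λ.suf p m h = Λ.suf p m' h' := by subst hm; rfl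

/-- Transitivity of prefixes. -/
lemma pre_pre (p : Λ.P) (m n : Fin k → ℕ) (hmn : m ≤ n) (hn : n ≤ Λ.d p)
    (hm : m ≤ Λ.d (Λ.pre p n hn)) (hmp : m ≤ Λ.d p) :
    Λ.pre p m hmp = Λ.pre (Λ.pre p n hn) m hm ∧
    ∃ hh : Λ.s (Λ.suf (Λ.pre p n hn) m hm) = Λ.r (Λ.suf p n hn),
      Λ.suf p m hmp = Λ.comp (Λ.suf (Λ.pre p n hn) m hm) (Λ.suf p n hn) hh := by
  obtain ⟨h1, hc1⟩ := Λ.pre_suf p n hn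
  obtain ⟨h2, hc2⟩ := Λ.pre_suf (Λ.pre p n hn) m hm
  have hh3 : Λ.s (Λ.suf (Λ.pre p n hn) m hm) = Λ.r (Λ.suf p n hn) := by
    rw [Λ.s_suf]; exact h1
  have hX : Λ.s (Λ.comp (Λ.pre (Λ.pre p n hn) m hm) (Λ.suf (Λ.pre p n hn) m hm) h2)
      = Λ.r (Λ.suf p n hn) := by rw [Λ.s_comp]; exact hh3
  have hh4 : Λ.s (Λ.pre (Λ.pre p n hn) m hm)
      = Λ.r (Λ.comp (Λ.suf (Λ.pre p n hn) m hm) (Λ.suf p n hn) hh3) := by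
    rw [Λ.r_comp]; exact h2
  have hA : Λ.comp (Λ.comp (Λ.pre (Λ.pre p n hn) m hm) (Λ.suf (Λ.pre p n hn) m hm) h2)
      (Λ.suf p n hn) hX = p := (Λ.comp_heq hc2 rfl hX h1).trans hc1
  have hassoc : Λ.comp (Λ.pre (Λ.pre p n hn) m hm)
      (Λ.comp (Λ.suf (Λ.pre p n hn) m hm) (Λ.suf p n hn) hh3) hh4 = p :=
    (Λ.comp_assoc _ _ _ h2 hh3 hX hh4).symm.trans hA
  have huniq := Λ.pre_unique p m hmp _ _ hh4 hassoc (Λ.d_pre (Λ.pre p n hn) m hm)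
  exact ⟨huniq.1, hh3, huniq.2⟩

/-- The middle segment `[m,n]` of a path `p` with `m ≤ n ≤ d p`. -/
noncomputable def mid (p : Λ.P) (m n : Fin k → ℕ) (h1 : m ≤ n) (h2 : n ≤ Λ.d p) : Λ.P :=
  Λ.suf (Λ.pre p n h2) m (by rw [Λ.d_pre]; exact h1)

lemma d_mid (p m n h1 h2) : Λ.d (Λ.mid p m n h1 h2) = n - m := by
  rw [mid, Λ.d_suf, Λ.d_pre]

lemma r_mid (p m n h1 h2) (hm : m ≤ Λ.d p) : Λ.r (Λ.mid p m n h1 h2) = Λ.s (Λ.pre p m hm) := by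
  rw [mid, ← Λ.s_pre_eq_r_suf]
  congr 1
  exact (Λ.pre_pre p m n h1 h2 _ hm).1.symm

lemma s_mid (p m n h1 h2) (hn : n ≤ Λ.d p) : Λ.s (Λ.mid p m n h1 h2) = Λ.s (Λ.pre p n hn) := by
  rw [mid, Λ.s_suf]

lemma mid_self (p m) (h2 : m ≤ Λ.d p) :
    Λ.mid p m m le_rfl h2 = Λ.ident (Λ.s (Λ.pre p m h2)) := by
  rw [mid, Λ.suf_congr _ m (Λ.d (Λ.pre p m h2)) _ (Λ.d_pre p m h2).symm le_rfl]
  exact Λ.suf_full _ le_rfl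

lemma mid_zero (p n) (h2 : n ≤ Λ.d p) (h1 : (0:Fin k → ℕ) ≤ n) :
    Λ.mid p 0 n h1 h2 = Λ.pre p n h2 := by
  rw [mid, Λ.suf_zero]

lemma mid_comp (p : Λ.P) (m n l : Fin k → ℕ) (h1 : m ≤ n) (h2 : n ≤ l) (h3 : l ≤ Λ.d p)
    (hh : Λ.s (Λ.mid p m n h1 (h2.trans h3)) = Λ.r (Λ.mid p n l h2 h3)) :
    Λ.comp (Λ.mid p m n h1 (h2.trans h3)) (Λ.mid p n l h2 h3) hh
      = Λ.mid p m l (h1.trans h2) h3 := by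
  set q := Λ.pre p l h3 with hq
  have hnq : n ≤ Λ.d q := by rw [Λ.d_pre]; exact h2
  have hmq : m ≤ Λ.d q := by rw [Λ.d_pre]; exact h1.trans h2
  have e1 : Λ.pre p n (h2.trans h3) = Λ.pre q n hnq := (Λ.pre_pre p n l h2 h3 hnq _).1
  have hm' : m ≤ Λ.d (Λ.pre q n hnq) := by rw [Λ.d_pre]; exact h1
  have e2 : Λ.mid p m l (h1.trans h2) h3 = Λ.suf q m hmq := rfl
  have e3 : Λ.mid p n l h2 h3 = Λ.suf q n hnq := rfl
  have e4 : Λ.mid p m n h1 (h2.trans h3) = Λ.suf (Λ.pre q n hnq) m hm' :=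
    Λ.suf_path_congr e1 m (by rw [Λ.d_pre]; exact h1) hm'
  obtain ⟨hh', hc'⟩ := (Λ.pre_pre q m n h1 hnq hm' hmq).2
  exact ((Λ.comp_heq e4 e3 hh hh').trans hc'.symm).trans e2.symm


lemma pre_path_congr {p p' : Λ.P} (hp : p = p') (m : Fin k → ℕ) (h : m ≤ Λ.d p)
    (h' : m ≤ Λ.d p') : Λ.pre p m h = Λ.pre p' m h' := by subst hp; rfl

lemma d_comp_le (a c : Λ.P) (h : Λ.s a = Λ.r c) : Λ.d a ≤ Λ.d (Λ.comp a c h) := by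
  rw [Λ.d_comp]; intro i; simp only [Pi.add_apply]; omega

lemma pre_of_comp (a c : Λ.P) (h : Λ.s a = Λ.r c) (n : Fin k → ℕ) (hn : n ≤ Λ.d a)
    (hn' : n ≤ Λ.d (Λ.comp a c h)) :
    Λ.pre (Λ.comp a c h) n hn' = Λ.pre a n hn := by
  have hda : Λ.d a ≤ Λ.d (Λ.comp a c h) := Λ.d_comp_le a c h
  have ha : Λ.pre (Λ.comp a c h) (Λ.d a) hda = a := (Λ.pre_unique _ _ hda a c h rfl rfl).1
  have h2 : n ≤ Λ.d (Λ.pre (Λ.comp a c h) (Λ.d a) hda) := by rw [Λ.d_pre]; exact hn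
  calc Λ.pre (Λ.comp a c h) n hn'
      = Λ.pre (Λ.pre (Λ.comp a c h) (Λ.d a) hda) n h2 :=
        (Λ.pre_pre _ n (Λ.d a) hn hda h2 hn').1
    _ = Λ.pre a n hn := Λ.pre_path_congr ha n h2 hn

lemma mid_of_comp (a c : Λ.P) (h : Λ.s a = Λ.r c) (m n : Fin k → ℕ) (h1 : m ≤ n)
    (hn : n ≤ Λ.d a) (hn' : n ≤ Λ.d (Λ.comp a c h)) :
    Λ.mid (Λ.comp a c h) m n h1 hn' = Λ.mid a m n h1 hn :=
  Λ.suf_path_congr (Λ.pre_of_comp a c h n hn hn') m _ _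

end KGraph


namespace KGraph

variable {k : ℕ} (Λ : KGraph k) (hfin : Λ.RowFinite)

lemma mem_pathsSet {v : Λ.V} {n : Fin k → ℕ} {p : Λ.P} :
    p ∈ Λ.pathsSet v n ↔ Λ.r p = v ∧ Λ.d p = n := Iff.rfl

lemma mem_toFinset_paths {v : Λ.V} {n : Fin k → ℕ} {p : Λ.P} :
    p ∈ (hfin v n).toFinset ↔ Λ.r p = v ∧ Λ.d p = n := by
  rw [Set.Finite.mem_toFinset]; rfl

lemma exists_support_add {α : Type*} (a b : α →₀ ℕ) (S : α → Prop) :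
    (∃ q ∈ (a + b).support, S q) ↔ (∃ q ∈ a.support, S q) ∨ (∃ q ∈ b.support, S q) := by
  constructor
  · rintro ⟨q, hq, hS⟩
    rw [Finsupp.mem_support_iff, Finsupp.add_apply] at hq
    rcases Nat.eq_zero_or_pos (a q) with h | h
    · exact Or.inr ⟨q, Finsupp.mem_support_iff.2 (by omega), hS⟩
    · exact Or.inl ⟨q, Finsupp.mem_support_iff.2 (by omega), hS⟩
  · rintro (⟨q, hq, hS⟩ | ⟨q, hq, hS⟩) <;>
    · rw [Finsupp.mem_support_iff] at hq
      exact ⟨q, Finsupp.mem_support_iff.2 (by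
        rw [Finsupp.add_apply]; omega), hS⟩

lemma mem_support_sum_single {ι α : Type*} [DecidableEq α] (F : Finset ι) (f : ι → α) (q : α) :
    q ∈ (∑ p ∈ F, Finsupp.single (f p) (1:ℕ)).support ↔ ∃ p ∈ F, f p = q := by
  rw [Finsupp.mem_support_iff, Finsupp.finset_sum_apply]
  simp only [Finsupp.single_apply]
  rw [← not_iff_not]
  push_neg
  rw [Finset.sum_eq_zero_iff]
  constructor
  · intro h p hp
    have := h p hp
    by_contra hc
    rw [if_pos hc] at this; omega
  · intro h p hp
    rw [if_neg (h p hp)]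

/-- Invariance of "has support meeting `S`" under the talented-monoid congruence,
provided `S` satisfies the local exchange condition. -/
lemma talcon_supp_iff (S : Set Λ.V)
    (hS : ∀ (v : Λ.V) (i : Fin k),
      v ∈ S ↔ ∃ p : Λ.P, Λ.r p = v ∧ Λ.d p = Pi.single i 1 ∧ Λ.s p ∈ S)
    {a b : TalF Λ} (h : TalCon Λ hfin a b) :
    (∃ q ∈ a.support, q.1 ∈ S) ↔ (∃ q ∈ b.support, q.1 ∈ S) := by
  classical
  let c : AddCon (TalF Λ) :=
    { r := fun a b => ((∃ q ∈ a.support, q.1 ∈ S) ↔ (∃ q ∈ b.support, q.1 ∈ S)),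
      iseqv := ⟨fun _ => Iff.rfl, Iff.symm, Iff.trans⟩,
      add' := by
        intro w x y z h1 h2
        show (∃ q ∈ (w + y).support, q.1 ∈ S) ↔ (∃ q ∈ (x + z).support, q.1 ∈ S)
        rw [exists_support_add w y (fun q => q.1 ∈ S),
          exists_support_add x z (fun q => q.1 ∈ S)]
        exact or_congr h1 h2 }
  have hbase : ∀ x y, TalRel Λ hfin x y → c x y := by
    rintro x y ⟨v, n, i, hx, hy⟩
    subst hx; subst hy
    show (∃ q ∈ (Finsupp.single (v, n) (1:ℕ)).support, q.1 ∈ S) ↔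
      (∃ q ∈ (∑ p ∈ (hfin v (Pi.single i 1)).toFinset,
        Finsupp.single (Λ.s p, n + Pi.single i 1) (1:ℕ)).support, q.1 ∈ S)
    rw [Finsupp.support_single_ne_zero _ (by norm_num)]
    constructor
    · rintro ⟨q, hq, hqS⟩
      rw [Finset.mem_singleton] at hq
      subst hq
      obtain ⟨p, hr, hd, hs⟩ := (hS v i).1 hqS
      exact ⟨(Λ.s p, n + Pi.single i 1),
        (mem_support_sum_single _ _ _).2 ⟨p, (mem_toFinset_paths Λ hfin).2 ⟨hr, hd⟩, rfl⟩, hs⟩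
    · rintro ⟨q, hq, hqS⟩
      obtain ⟨p, hp, hpq⟩ := (mem_support_sum_single _ _ _).1 hq
      rw [mem_toFinset_paths Λ hfin] at hp
      refine ⟨(v, n), Finset.mem_singleton_self _, ?_⟩
      exact (hS v i).2 ⟨p, hp.1, hp.2, by rw [← hpq] at hqS; exact hqS⟩
  exact (AddCon.addConGen_le.2 hbase) h

/-- With no sources, the congruence preserves being nonzero. -/
lemma talcon_zero_iff (hns : Λ.NoSources) {a b : TalF Λ} (h : TalCon Λ hfin a b) :
    a = 0 ↔ b = 0 := by
  have h1 := talcon_supp_iff Λ hfin Set.univ (fun v i => by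
    obtain ⟨p, hp⟩ := hns v (Pi.single i 1)
    simp only [Set.mem_univ, true_iff]
    exact ⟨p, hp.1, hp.2, trivial⟩) h
  have h2 : a.support.Nonempty ↔ b.support.Nonempty := by
    simpa [Finset.Nonempty, Set.mem_univ] using h1
  rw [← not_iff_not]
  rw [show ¬ a = 0 ↔ a ≠ 0 from Iff.rfl, show ¬ b = 0 ↔ b ≠ 0 from Iff.rfl,
    ← Finsupp.support_nonempty_iff, ← Finsupp.support_nonempty_iff]
  exact h2

lemma tmk_eq_iff {a b : TalF Λ} : tmk Λ hfin a = tmk Λ hfin b ↔ TalCon Λ hfin a b :=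
  AddCon.eq _

lemma tmk_add (a b : TalF Λ) : tmk Λ hfin (a + b) = tmk Λ hfin a + tmk Λ hfin b :=
  map_add _ _ _

lemma tmk_zero : tmk Λ hfin 0 = 0 := map_zero _

lemma tmk_surjective : Function.Surjective (tmk Λ hfin) :=
  AddCon.mk'_surjective

/-- sum congruence for AddCon -/
lemma addCon_sum {M : Type*} [AddCommMonoid M] (c : AddCon M) {ι : Type*} (F : Finset ι)
    (f g : ι → M) (h : ∀ p ∈ F, c (f p) (g p)) : c (∑ p ∈ F, f p) (∑ p ∈ F, g p) := by
  classical
  induction F using Finset.induction with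
  | empty => simpa using c.refl 0
  | @insert x F' hx ih =>
    rw [Finset.sum_insert hx, Finset.sum_insert hx]
    exact c.add (h x (Finset.mem_insert_self x F'))
      (ih fun p hp => h p (Finset.mem_insert_of_mem hp))

/-- Factorisation bijection: summing over `vΛ^{n'+e_i}` equals double sum. -/
lemma sum_decomp {M : Type*} [AddCommMonoid M] (v : Λ.V) (n' : Fin k → ℕ) (i : Fin k)
    (n : Fin k → ℕ) (hn : n = n' + Pi.single i 1) (g : Λ.V → M) :
    ∑ q ∈ (hfin v n).toFinset, g (Λ.s q)
      = ∑ p ∈ (hfin v n').toFinset, ∑ α ∈ (hfin (Λ.s p) (Pi.single i 1)).toFinset, g (Λ.s α) := by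
  classical
  rw [← Finset.sum_sigma ((hfin v n').toFinset)
    (fun p => (hfin (Λ.s p) (Pi.single i 1)).toFinset) (fun x => g (Λ.s x.2))]
  have hle : ∀ q ∈ (hfin v n).toFinset, n' ≤ Λ.d q := by
    intro q hq
    rw [mem_toFinset_paths Λ hfin] at hq
    rw [hq.2, hn]; intro j; simp only [Pi.add_apply]; omega
  refine Finset.sum_bij' (i := fun q hq => ⟨Λ.pre q n' (hle q hq), Λ.suf q n' (hle q hq)⟩)
    (j := fun x hx => Λ.comp x.1 x.2 ?_) ?_ ?_ ?_ ?_ ?_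
  · -- s x.1 = r x.2
    rw [Finset.mem_sigma, mem_toFinset_paths Λ hfin, mem_toFinset_paths Λ hfin] at hx
    exact hx.2.1.symm
  · -- hi : image in sigma finset
    intro q hq
    rw [Finset.mem_sigma, mem_toFinset_paths Λ hfin, mem_toFinset_paths Λ hfin]
    rw [mem_toFinset_paths Λ hfin] at hq
    refine ⟨⟨?_, Λ.d_pre _ _ _⟩, Λ.s_pre_eq_r_suf _ _ _ |>.symm, ?_⟩
    · rw [Λ.r_pre, hq.1]
    · rw [Λ.d_suf, hq.2, hn]; funext j; simp only [Pi.sub_apply, Pi.add_apply]; omega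
  · -- hj : comp lands in LHS finset
    intro x hx
    rw [Finset.mem_sigma, mem_toFinset_paths Λ hfin, mem_toFinset_paths Λ hfin] at hx
    rw [mem_toFinset_paths Λ hfin]
    constructor
    · rw [Λ.r_comp]; exact hx.1.1
    · rw [Λ.d_comp, hx.1.2, hx.2.2]; exact hn.symm
  · -- left inverse : j (i q) = q
    intro q hq
    obtain ⟨hh, hc⟩ := Λ.pre_suf q n' (hle q hq)
    exact hc
  · -- right inverse : i (j x) = x
    intro x hx
    rw [Finset.mem_sigma, mem_toFinset_paths Λ hfin, mem_toFinset_paths Λ hfin] at hx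
    have huniq := Λ.pre_unique (Λ.comp x.1 x.2 hx.2.1.symm) n'
      (hle _ (by
        rw [mem_toFinset_paths Λ hfin]
        exact ⟨by rw [Λ.r_comp]; exact hx.1.1,
          by rw [Λ.d_comp, hx.1.2, hx.2.2]; exact hn.symm⟩))
      x.1 x.2 hx.2.1.symm rfl hx.1.2
    exact Sigma.ext huniq.1 (heq_of_eq huniq.2)
  · -- terms agree
    intro q hq
    rw [Λ.s_suf]

/-- Key lemma: `v(m) = Σ_{q ∈ vΛⁿ} s(q)(m+n)` in the talented monoid congruence. -/
lemma key_relation (v : Λ.V) (n : Fin k → ℕ) (m : Fin k → ℤ) :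
    TalCon Λ hfin (Finsupp.single (v, m) 1)
      (∑ q ∈ (hfin v n).toFinset, Finsupp.single (Λ.s q, m + fun j => (n j : ℤ)) 1) := by
  classical
  suffices H : ∀ (N : ℕ) (n : Fin k → ℕ), (∑ j, n j) = N → ∀ (v : Λ.V) (m : Fin k → ℤ),
      TalCon Λ hfin (Finsupp.single (v, m) 1)
        (∑ q ∈ (hfin v n).toFinset, Finsupp.single (Λ.s q, m + fun j => (n j : ℤ)) 1) by
    exact H _ n rfl v m
  intro N
  induction N with
  | zero =>
    intro n hn v m
    have hn0 : n = 0 := by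
      funext j
      have := Finset.sum_eq_zero_iff.1 hn j (Finset.mem_univ j)
      simpa using this
    subst hn0
    have hset : (hfin v 0).toFinset = {Λ.ident v} := by
      ext p
      rw [mem_toFinset_paths Λ hfin, Finset.mem_singleton]
      constructor
      · rintro ⟨hr, hd⟩
        rw [Λ.eq_ident_of_d_eq_zero p hd, hr]
      · rintro rfl
        exact ⟨Λ.r_ident v, Λ.d_ident v⟩
    rw [hset, Finset.sum_singleton, Λ.s_ident]
    have : (m + fun j => ((0:Fin k → ℕ) j : ℤ)) = m := by funext j; simp
    rw [this]
    exact (TalCon Λ hfin).refl _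
  | succ N ih =>
    intro n hn v m
    have : ∃ i, n i ≠ 0 := by
      by_contra hc
      push_neg at hc
      rw [Finset.sum_eq_zero (fun j _ => hc j)] at hn
      omega
    obtain ⟨i, hi⟩ := this
    set n' : Fin k → ℕ := n - Pi.single i 1 with hn'
    have hnn' : n = n' + Pi.single i 1 := by
      funext j
      simp only [hn', Pi.add_apply, Pi.sub_apply, Pi.single_apply]
      split_ifs with hji
      · subst hji; omega
      · omega
    have hsum' : (∑ j, n' j) = N := by
      have h1 : ∑ j, n j = (∑ j, n' j) + ∑ j, (Pi.single i 1 : Fin k → ℕ) j := by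
        rw [← Finset.sum_add_distrib]
        apply Finset.sum_congr rfl
        intro j _
        conv_lhs => rw [hnn']
        rfl
      have h2 : ∑ j, (Pi.single i 1 : Fin k → ℕ) j = 1 := by
        simp [Pi.single_apply]
      rw [h1, h2] at hn
      omega
    have step1 := ih n' hsum' v m
    -- expand each term of the sum by the base relation
    have step2 : TalCon Λ hfin
        (∑ q ∈ (hfin v n').toFinset, Finsupp.single (Λ.s q, m + fun j => (n' j : ℤ)) 1)
        (∑ q ∈ (hfin v n').toFinset, ∑ α ∈ (hfin (Λ.s q) (Pi.single i 1)).toFinset,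
          Finsupp.single (Λ.s α, (m + fun j => (n' j : ℤ)) + Pi.single i 1) 1) := by
      apply addCon_sum
      intro q _
      exact AddConGen.Rel.of _ _ ⟨Λ.s q, m + fun j => (n' j : ℤ), i, rfl, rfl⟩
    have step3 :
        (∑ q ∈ (hfin v n').toFinset, ∑ α ∈ (hfin (Λ.s q) (Pi.single i 1)).toFinset,
          Finsupp.single (Λ.s α, (m + fun j => (n' j : ℤ)) + Pi.single i 1) 1)
        = ∑ q ∈ (hfin v n).toFinset, Finsupp.single (Λ.s q, m + fun j => (n j : ℤ)) 1 := by
      have heq : ((m + fun j => (n' j : ℤ)) + (Pi.single i 1 : Fin k → ℤ))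
          = m + fun j => (n j : ℤ) := by
        funext j
        by_cases hj : j = i <;>
          simp only [Pi.add_apply, Pi.single_apply] <;> rw [hnn'] <;>
          simp only [Pi.add_apply, Pi.sub_apply, Pi.single_apply, hn'] <;> split <;>
          push_cast <;> omega
      rw [heq]
      exact (sum_decomp Λ hfin v n' i n hnn'
        (fun w => (Finsupp.single (w, m + fun j => (n j : ℤ)) 1 : TalF Λ))).symm
    exact (TalCon Λ hfin).trans step1 (step3 ▸ step2)

end KGraph


namespace KGraph

variable {k : ℕ} (Λ : KGraph k) (hfin : Λ.RowFinite)

/-- The class of the generator `w(n)` in the talented monoid. -/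
noncomputable def tau (w : Λ.V) (n : Fin k → ℤ) : Tal Λ hfin :=
  tmk Λ hfin (Finsupp.single (w, n) 1)

lemma shiftF_single (w : Λ.V) (n p : Fin k → ℤ) :
    shiftF Λ p (Finsupp.single (w, n) 1) = Finsupp.single (w, n + p) 1 := by
  rw [shiftF, Finsupp.mapDomain_single]

lemma tau_shift {J : Set (Tal Λ hfin)} (hJ : IsOrderIdeal Λ hfin J) {w : Λ.V}
    {n : Fin k → ℤ} (h : tau Λ hfin w n ∈ J) (n' : Fin k → ℤ) : tau Λ hfin w n' ∈ J := by
  have := hJ.2.2.2 (n' - n) _ h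
  rw [shiftF_single] at this
  have he : n + (n' - n) = n' := by ring
  rw [he] at this
  exact this

lemma tau_ne_zero (hns : Λ.NoSources) (w : Λ.V) (n : Fin k → ℤ) :
    tau Λ hfin w n ≠ 0 := by
  intro h
  rw [tau, show (0 : Tal Λ hfin) = tmk Λ hfin 0 from (tmk_zero Λ hfin).symm,
    tmk_eq_iff] at h
  have := (talcon_zero_iff Λ hfin hns h).2 rfl
  have h2 : (Finsupp.single (w, n) (1:ℕ)) (w, n) = (0 : TalF Λ) (w, n) := by rw [this]
  rw [Finsupp.single_eq_same] at h2
  simp at h2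

/-- `tau w 0` expands along `wΛⁿ`. -/
lemma tau_expand (w : Λ.V) (n : Fin k → ℕ) (m : Fin k → ℤ) :
    tau Λ hfin w m
      = tmk Λ hfin (∑ q ∈ (hfin w n).toFinset,
          Finsupp.single (Λ.s q, m + fun j => (n j : ℤ)) 1) :=
  (tmk_eq_iff Λ hfin).2 (key_relation Λ hfin w n m)

lemma mem_of_add_single {J : Set (Tal Λ hfin)} (hJ : IsOrderIdeal Λ hfin J)
    (b : TalF Λ) (q : Λ.V × (Fin k → ℤ)) (hq : q ∈ b.support)
    (hb : tmk Λ hfin b ∈ J) : tau Λ hfin q.1 q.2 ∈ J := by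
  classical
  have h1 : Finsupp.single q (1:ℕ) + (Finsupp.single q (b q - 1) + b.erase q) = b := by
    rw [← add_assoc, ← Finsupp.single_add]
    have : 1 + (b q - 1) = b q := by
      have := Finsupp.mem_support_iff.1 hq; omega
    rw [this, Finsupp.single_add_erase]
  have h2 : tau Λ hfin q.1 q.2 + tmk Λ hfin (Finsupp.single q (b q - 1) + b.erase q)
      = tmk Λ hfin b := by
    rw [tau, ← tmk_add, h1]
  exact hJ.2.2.1 _ _ (h2 ▸ hb)

/-- The vertex set attached to an order ideal. -/
def HJ (J : Set (Tal Λ hfin)) : Set Λ.V := {w | tau Λ hfin w 0 ∈ J}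

lemma HJ_hereditary {J : Set (Tal Λ hfin)} (hJ : IsOrderIdeal Λ hfin J) (p : Λ.P)
    (hp : Λ.r p ∈ HJ Λ hfin J) : Λ.s p ∈ HJ Λ hfin J := by
  classical
  have h1 : tau Λ hfin (Λ.r p) 0 ∈ J := hp
  rw [tau_expand Λ hfin (Λ.r p) (Λ.d p) 0] at h1
  have hpmem : p ∈ (hfin (Λ.r p) (Λ.d p)).toFinset :=
    (mem_toFinset_paths Λ hfin).2 ⟨rfl, rfl⟩
  have h2 : Finsupp.single (Λ.s p, (0:Fin k → ℤ) + fun j => (Λ.d p j : ℤ)) (1:ℕ)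
      + ∑ q ∈ ((hfin (Λ.r p) (Λ.d p)).toFinset.erase p),
          Finsupp.single (Λ.s q, (0:Fin k → ℤ) + fun j => (Λ.d p j : ℤ)) 1
      = ∑ q ∈ (hfin (Λ.r p) (Λ.d p)).toFinset,
          Finsupp.single (Λ.s q, (0:Fin k → ℤ) + fun j => (Λ.d p j : ℤ)) 1 :=
    Finset.add_sum_erase _ _ hpmem
  rw [← h2, tmk_add] at h1
  have h3 := hJ.2.2.1 _ _ h1
  exact tau_shift Λ hfin hJ h3 0

lemma sum_mem_ideal {J : Set (Tal Λ hfin)} (hJ : IsOrderIdeal Λ hfin J)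
    {ι : Type*} (F : Finset ι) (f : ι → Tal Λ hfin) (h : ∀ q ∈ F, f q ∈ J) :
    (∑ q ∈ F, f q) ∈ J := by
  classical
  induction F using Finset.induction with
  | empty => simpa using hJ.1
  | @insert x F' hx ih =>
    rw [Finset.sum_insert hx]
    exact hJ.2.1 _ _ (h x (Finset.mem_insert_self x F'))
      (ih fun q hq => h q (Finset.mem_insert_of_mem hq))

lemma HJ_saturated {J : Set (Tal Λ hfin)} (hJ : IsOrderIdeal Λ hfin J) (w : Λ.V)
    (n : Fin k → ℕ) (h : ∀ p : Λ.P, Λ.r p = w → Λ.d p = n → Λ.s p ∈ HJ Λ hfin J) :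
    w ∈ HJ Λ hfin J := by
  show tau Λ hfin w 0 ∈ J
  rw [tau_expand Λ hfin w n 0]
  rw [show tmk Λ hfin (∑ q ∈ (hfin w n).toFinset,
      Finsupp.single (Λ.s q, (0:Fin k → ℤ) + fun j => (n j : ℤ)) 1)
    = ∑ q ∈ (hfin w n).toFinset,
        tmk Λ hfin (Finsupp.single (Λ.s q, (0:Fin k → ℤ) + fun j => (n j : ℤ)) 1)
    from map_sum ((TalCon Λ hfin).mk') _ _]
  apply sum_mem_ideal Λ hfin hJ
  intro q hq
  rw [mem_toFinset_paths Λ hfin] at hq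
  exact tau_shift Λ hfin hJ (h q hq.1 hq.2) _

end KGraph


namespace KGraph

variable {k : ℕ} (Λ : KGraph k)

/-- `w` admits arbitrarily long paths avoiding `H`. -/
def Good (H : Set Λ.V) (w : Λ.V) : Prop :=
  ∀ l : ℕ, ∃ c : Λ.P, Λ.r c = w ∧ Λ.d c = (fun _ => l) ∧ Λ.s c ∉ H

lemma good_of_not_mem (H : Set Λ.V)
    (hsat : ∀ (w : Λ.V) (n : Fin k → ℕ),
      (∀ p : Λ.P, Λ.r p = w → Λ.d p = n → Λ.s p ∈ H) → w ∈ H)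
    {w : Λ.V} (hw : w ∉ H) : Good Λ H w := by
  intro l
  by_contra hc
  push_neg at hc
  exact hw (hsat w (fun _ => l) hc)

lemma fail_persist (H : Set Λ.V) (hher : ∀ p : Λ.P, Λ.r p ∈ H → Λ.s p ∈ H)
    {u : Λ.V} {l l' : ℕ} (hll : l ≤ l')
    (hfail : ∀ c : Λ.P, Λ.r c = u → Λ.d c = (fun _ => l) → Λ.s c ∈ H) :
    ∀ c : Λ.P, Λ.r c = u → Λ.d c = (fun _ => l') → Λ.s c ∈ H := by
  intro c hr hd
  have hle : (fun _ => l : Fin k → ℕ) ≤ Λ.d c := by rw [hd]; intro i; exact hll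
  have h1 : Λ.s (Λ.pre c (fun _ => l) hle) ∈ H := by
    apply hfail
    · rw [Λ.r_pre, hr]
    · exact Λ.d_pre _ _ _
  have h2 : Λ.r (Λ.suf c (fun _ => l) hle) ∈ H := by
    rw [← Λ.s_pre_eq_r_suf]; exact h1
  have h3 := hher _ h2
  rw [Λ.s_suf] at h3
  exact h3

lemma good_step (hfin : Λ.RowFinite) (H : Set Λ.V)
    (hher : ∀ p : Λ.P, Λ.r p ∈ H → Λ.s p ∈ H)
    {w : Λ.V} (hg : Good Λ H w) :
    ∃ e : Λ.P, Λ.r e = w ∧ Λ.d e = (fun _ => 1) ∧ Good Λ H (Λ.s e) := by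
  classical
  by_contra hcon
  push_neg at hcon
  have hfailx : ∀ e : Λ.P, Λ.r e = w → Λ.d e = (fun _ => 1) →
      ∃ l, ∀ c : Λ.P, Λ.r c = Λ.s e → Λ.d c = (fun _ => l) → Λ.s c ∈ H := by
    intro e hr hd
    have h0 := hcon e hr hd
    rw [Good] at h0
    push_neg at h0
    obtain ⟨l, hl⟩ := h0
    exact ⟨l, hl⟩
  set F := (hfin w (fun _ => 1)).toFinset with hF
  let L : Λ.P → ℕ := fun e =>
    if h : ∃ l, ∀ c : Λ.P, Λ.r c = Λ.s e → Λ.d c = (fun _ => l) → Λ.s c ∈ H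
    then h.choose else 0
  set M := F.sup L with hM
  obtain ⟨c, hrc, hdc, hsc⟩ := hg (M + 1)
  have h1le : (fun _ => 1 : Fin k → ℕ) ≤ Λ.d c := by rw [hdc]; intro i; show (1:ℕ) ≤ M + 1; omega
  set e := Λ.pre c (fun _ => 1) h1le with he
  set c2 := Λ.suf c (fun _ => 1) h1le with hc2
  have hre : Λ.r e = w := by rw [he, Λ.r_pre, hrc]
  have hde : Λ.d e = (fun _ => 1) := Λ.d_pre _ _ _
  have heF : e ∈ F := (mem_toFinset_paths Λ hfin).2 ⟨hre, hde⟩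
  have hex := hfailx e hre hde
  have hfail : ∀ c' : Λ.P, Λ.r c' = Λ.s e → Λ.d c' = (fun _ => L e) → Λ.s c' ∈ H := by
    have hLe : L e = hex.choose := dif_pos hex
    rw [hLe]
    exact hex.choose_spec
  have hfailM : ∀ c' : Λ.P, Λ.r c' = Λ.s e → Λ.d c' = (fun _ => M) → Λ.s c' ∈ H :=
    fail_persist Λ H hher (Finset.le_sup heF) hfail
  apply hsc
  have hs2 : Λ.s c2 = Λ.s c := Λ.s_suf _ _ _
  rw [← hs2]
  apply hfailM
  · rw [hc2, ← Λ.s_pre_eq_r_suf]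
  · rw [hc2, Λ.d_suf, hdc]; funext j; simp only [Pi.sub_apply]; omega

/-- One step of the Kőnig chain. -/
noncomputable def chainStep (hfin : Λ.RowFinite) (H : Set Λ.V)
    (hher : ∀ p : Λ.P, Λ.r p ∈ H → Λ.s p ∈ H) (v : Λ.V)
    (c : {p : Λ.P // Λ.r p = v ∧ Good Λ H (Λ.s p)}) :
    {p : Λ.P // Λ.r p = v ∧ Good Λ H (Λ.s p)} :=
  ⟨Λ.comp c.1 (good_step Λ hfin H hher c.2.2).choose
      ((good_step Λ hfin H hher c.2.2).choose_spec.1).symm,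
    by rw [Λ.r_comp]; exact c.2.1,
    by rw [Λ.s_comp]; exact (good_step Λ hfin H hher c.2.2).choose_spec.2.2⟩

/-- The Kőnig chain. -/
noncomputable def chainF (hfin : Λ.RowFinite) (H : Set Λ.V)
    (hher : ∀ p : Λ.P, Λ.r p ∈ H → Λ.s p ∈ H) (v : Λ.V) (hv : Good Λ H v) :
    ℕ → {p : Λ.P // Λ.r p = v ∧ Good Λ H (Λ.s p)}
  | 0 => ⟨Λ.ident v, Λ.r_ident v, by rw [Λ.s_ident]; exact hv⟩
  | (j + 1) => chainStep Λ hfin H hher v (chainF hfin H hher v hv j)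

lemma chainF_d (hfin : Λ.RowFinite) (H : Set Λ.V)
    (hher : ∀ p : Λ.P, Λ.r p ∈ H → Λ.s p ∈ H) (v : Λ.V) (hv : Good Λ H v) (j : ℕ) :
    Λ.d (chainF Λ hfin H hher v hv j).1 = (fun _ => j) := by
  induction j with
  | zero => rw [chainF, Λ.d_ident]; rfl
  | succ j ih =>
    show Λ.d (chainStep Λ hfin H hher v (chainF Λ hfin H hher v hv j)).1 = _
    rw [chainStep]
    rw [Λ.d_comp, ih,
      (good_step Λ hfin H hher (chainF Λ hfin H hher v hv j).2.2).choose_spec.2.1]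
    funext i; simp only [Pi.add_apply]

lemma chainF_succ (hfin : Λ.RowFinite) (H : Set Λ.V)
    (hher : ∀ p : Λ.P, Λ.r p ∈ H → Λ.s p ∈ H) (v : Λ.V) (hv : Good Λ H v) (j : ℕ) :
    ∃ (e : Λ.P) (hh : Λ.s (chainF Λ hfin H hher v hv j).1 = Λ.r e),
      (chainF Λ hfin H hher v hv (j + 1)).1
        = Λ.comp (chainF Λ hfin H hher v hv j).1 e hh :=
  ⟨(good_step Λ hfin H hher (chainF Λ hfin H hher v hv j).2.2).choose,
   ((good_step Λ hfin H hher (chainF Λ hfin H hher v hv j).2.2).choose_spec.1).symm,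
   rfl⟩

/-- Prefix coherence of the chain. -/
lemma chainF_pre (hfin : Λ.RowFinite) (H : Set Λ.V)
    (hher : ∀ p : Λ.P, Λ.r p ∈ H → Λ.s p ∈ H) (v : Λ.V) (hv : Good Λ H v)
    {j j' : ℕ} (hj : j ≤ j')
    (n : Fin k → ℕ) (hn : n ≤ (fun _ => j : Fin k → ℕ))
    (h1 : n ≤ Λ.d (chainF Λ hfin H hher v hv j').1)
    (h2 : n ≤ Λ.d (chainF Λ hfin H hher v hv j).1) :
    Λ.pre (chainF Λ hfin H hher v hv j').1 n h1
      = Λ.pre (chainF Λ hfin H hher v hv j).1 n h2 := by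
  induction j' with
  | zero =>
    have hj0 : j = 0 := by omega
    subst hj0
    rfl
  | succ j' ih =>
    rcases Nat.lt_or_ge j (j'+1) with hlt | hge
    · have hj' : j ≤ j' := by omega
      obtain ⟨e, hh, hcomp⟩ := chainF_succ Λ hfin H hher v hv j'
      have hn' : n ≤ Λ.d (chainF Λ hfin H hher v hv j').1 := by
        rw [chainF_d]; intro i; show n i ≤ j'; have hni : n i ≤ j := hn i; omega
      calc Λ.pre (chainF Λ hfin H hher v hv (j'+1)).1 n h1
          = Λ.pre (Λ.comp (chainF Λ hfin H hher v hv j').1 e hh) n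
              (by rw [← hcomp]; exact h1) := Λ.pre_path_congr hcomp n _ _
        _ = Λ.pre (chainF Λ hfin H hher v hv j').1 n hn' := Λ.pre_of_comp _ _ _ _ _ _
        _ = Λ.pre (chainF Λ hfin H hher v hv j).1 n h2 := ih hj' hn'
    · have hj1 : j = j' + 1 := by omega
      subst hj1
      rfl

/-- Existence of an infinite path avoiding a saturated hereditary set. -/
lemma exists_infPath_avoiding (hfin : Λ.RowFinite) (H : Set Λ.V)
    (hher : ∀ p : Λ.P, Λ.r p ∈ H → Λ.s p ∈ H)
    (hsat : ∀ (w : Λ.V) (n : Fin k → ℕ),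
      (∀ p : Λ.P, Λ.r p = w → Λ.d p = n → Λ.s p ∈ H) → w ∈ H)
    (v : Λ.V) (hv : v ∉ H) :
    ∃ x : InfPath Λ, ∀ n, x.vert n ∉ H := by
  classical
  have hgood : Good Λ H v := good_of_not_mem Λ H hsat hv
  set P : ℕ → Λ.P := fun j => (chainF Λ hfin H hher v hgood j).1 with hP
  have dP : ∀ j, Λ.d (P j) = (fun _ => j) := fun j => chainF_d Λ hfin H hher v hgood j
  set jn : (Fin k → ℕ) → ℕ := fun n => ∑ i, n i with hjn
  have hlen : ∀ n : Fin k → ℕ, n ≤ (fun _ => jn n : Fin k → ℕ) := by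
    intro n i
    show n i ≤ ∑ i', n i'
    exact Finset.single_le_sum (fun _ _ => Nat.zero_le _) (Finset.mem_univ i)
  have hled : ∀ (n : Fin k → ℕ) (j : ℕ), n ≤ (fun _ => j : Fin k → ℕ) → n ≤ Λ.d (P j) := by
    intro n j h
    rw [hP, chainF_d]; exact h
  have hcoh : ∀ (n : Fin k → ℕ) (j j' : ℕ) (hj : n ≤ (fun _ => j : Fin k → ℕ))
      (hj' : n ≤ (fun _ => j' : Fin k → ℕ)),
      Λ.pre (P j) n (hled n j hj) = Λ.pre (P j') n (hled n j' hj') := by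
    intro n j j' hj hj'
    rcases le_or_gt j j' with h | h
    · exact (chainF_pre Λ hfin H hher v hgood h n hj _ _).symm
    · exact chainF_pre Λ hfin H hher v hgood h.le n hj' _ _
  refine ⟨⟨fun n => Λ.s (Λ.pre (P (jn n)) n (hled n _ (hlen n))),
    fun m n h => Λ.mid (P (jn n)) m n h (hled n _ (hlen n)), ?_, ?_, ?_, ?_, ?_⟩, ?_⟩
  · -- seg_r
    intro m n h
    have hm : m ≤ Λ.d (P (jn n)) := le_trans h (hled n _ (hlen n))
    rw [Λ.r_mid _ _ _ _ _ hm]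
    have hmj : m ≤ (fun _ => jn n : Fin k → ℕ) := le_trans h (hlen n)
    calc Λ.s (Λ.pre (P (jn n)) m hm)
        = Λ.s (Λ.pre (P (jn n)) m (hled m _ hmj)) := rfl
      _ = Λ.s (Λ.pre (P (jn m)) m (hled m _ (hlen m))) := by
          rw [hcoh m (jn n) (jn m) hmj (hlen m)]
  · -- seg_s
    intro m n h
    rw [Λ.s_mid _ _ _ _ _ (hled n _ (hlen n))]
  · -- seg_d
    intro m n h
    rw [Λ.d_mid]
  · -- seg_id
    intro m
    show Λ.mid (P (jn m)) m m le_rfl (hled m _ (hlen m))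
      = Λ.ident (Λ.s (Λ.pre (P (jn m)) m (hled m _ (hlen m))))
    rw [Λ.mid_self]
  · -- seg_comp
    intro m n p h1 h2 hh
    have hnp : n ≤ (fun _ => jn p : Fin k → ℕ) := le_trans h2 (hlen p)
    have e1 : Λ.mid (P (jn n)) m n h1 (hled n _ (hlen n))
        = Λ.mid (P (jn p)) m n h1 (hled n (jn p) hnp) := by
      rw [mid, mid]
      exact Λ.suf_path_congr (hcoh n (jn n) (jn p) (hlen n) hnp) m _ _
    rw [show Λ.comp (Λ.mid (P (jn n)) m n h1 (hled n _ (hlen n)))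
          (Λ.mid (P (jn p)) n p h2 (hled p _ (hlen p))) hh
        = Λ.comp (Λ.mid (P (jn p)) m n h1 (hled n (jn p) hnp))
          (Λ.mid (P (jn p)) n p h2 (hled p _ (hlen p))) (by rw [← e1]; exact hh)
      from Λ.comp_heq e1 rfl _ _]
    exact Λ.mid_comp (P (jn p)) m n p h1 h2 (hled p _ (hlen p)) _
  · -- vertices avoid H
    intro n hmem
    have hsP : Λ.s (P (jn n)) ∉ H := by
      obtain ⟨c, hrc, hdc, hsc⟩ := (chainF Λ hfin H hher v hgood (jn n)).2.2 0
      have hcid : c = Λ.ident (Λ.r c) := Λ.eq_ident_of_d_eq_zero c (by rw [hdc]; rfl)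
      rw [hcid, Λ.s_ident, hrc] at hsc
      exact hsc
    apply hsP
    have h2 : Λ.r (Λ.suf (P (jn n)) n (hled n _ (hlen n))) ∈ H := by
      rw [← Λ.s_pre_eq_r_suf]; exact hmem
    have h3 := hher _ h2
    rw [Λ.s_suf] at h3
    exact h3

end KGraph


open KGraph in
/-- A row-finite `k`-graph `Λ` with no sources is cofinal iff its talented monoid
`T_Λ` is a simple `ℤᵏ`-monoid (its only `ℤᵏ`-order ideals are `{0}` and `T_Λ`). -/
theorem stmt13 {k : ℕ} (Λ : KGraph k) (hfin : Λ.RowFinite) (hns : Λ.NoSources)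
    [Nonempty Λ.V] :
    Cofinal Λ ↔
      ∀ J : Set (Tal Λ hfin), IsOrderIdeal Λ hfin J → J = {0} ∨ J = Set.univ := by
  classical
  constructor
  · -- Cofinal → simple
    intro hcof J hJ
    by_cases h0 : J = {0}
    · exact Or.inl h0
    right
    have hex : ∃ t ∈ J, t ≠ 0 := by
      by_contra hc
      push_neg at hc
      exact h0 (Set.eq_singleton_iff_unique_mem.2 ⟨hJ.1, hc⟩)
    obtain ⟨t, htJ, htne⟩ := hex
    obtain ⟨b, rfl⟩ := tmk_surjective Λ hfin t
    have hbne : b ≠ 0 := fun hb => htne (by rw [hb, tmk_zero])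
    obtain ⟨q, hq⟩ := Finsupp.support_nonempty_iff.2 hbne
    have h1 : tau Λ hfin q.1 q.2 ∈ J := mem_of_add_single Λ hfin hJ b q hq htJ
    have h2 : q.1 ∈ HJ Λ hfin J := tau_shift Λ hfin hJ h1 0
    have hHuniv : ∀ w, w ∈ HJ Λ hfin J := by
      intro w
      by_contra hw
      obtain ⟨x, hx⟩ := exists_infPath_avoiding Λ hfin (HJ Λ hfin J)
        (HJ_hereditary Λ hfin hJ) (HJ_saturated Λ hfin hJ) w hw
      obtain ⟨n, p, hrp, hsp⟩ := hcof x q.1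
      exact hx n (hsp ▸ HJ_hereditary Λ hfin hJ p (hrp.symm ▸ h2))
    apply Set.eq_univ_of_forall
    intro t
    obtain ⟨b', rfl⟩ := tmk_surjective Λ hfin t
    induction b' using Finsupp.induction with
    | zero => rw [tmk_zero]; exact hJ.1
    | single_add a m f _ _ ih =>
      rw [tmk_add]
      refine hJ.2.1 _ _ ?_ ih
      have hsingle : ∀ m' : ℕ, tmk Λ hfin (Finsupp.single a m') ∈ J := by
        intro m'
        induction m' with
        | zero => rw [Finsupp.single_zero, tmk_zero]; exact hJ.1
        | succ m' ihm =>
          rw [show m' + 1 = m' + 1 from rfl, Finsupp.single_add, tmk_add]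
          refine hJ.2.1 _ _ ihm ?_
          have := tau_shift Λ hfin hJ (hHuniv a.1) a.2
          exact this
      exact hsingle m
  · -- simple → Cofinal
    intro hsimp x v
    by_contra hcon
    push_neg at hcon
    set H : Set Λ.V := {w | ∀ (n : Fin k → ℕ) (p : Λ.P), Λ.r p = w → Λ.s p ≠ x.vert n}
      with hH
    have hvH : v ∈ H := by
      intro n p hr hs
      exact hcon n p hr hs
    have hx0 : x.vert 0 ∉ H := by
      intro hmem
      exact hmem 0 (Λ.ident (x.vert 0)) (Λ.r_ident _) (Λ.s_ident _)
    have hher : ∀ p : Λ.P, Λ.r p ∈ H → Λ.s p ∈ H := by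
      intro p hp n q hrq hsq
      exact hp n (Λ.comp p q hrq.symm) (Λ.r_comp _ _ _) (by rw [Λ.s_comp]; exact hsq)
    have hsat : ∀ (w : Λ.V) (n : Fin k → ℕ),
        (∀ p : Λ.P, Λ.r p = w → Λ.d p = n → Λ.s p ∈ H) → w ∈ H := by
      intro w n hall m q hrq hsq
      have hmn : m ≤ m + n := le_self_add
      have ht : Λ.s q = Λ.r (x.seg m (m + n) hmn) := by rw [x.seg_r, hsq]
      have hdt : n ≤ Λ.d (Λ.comp q (x.seg m (m + n) hmn) ht) := by
        rw [Λ.d_comp, x.seg_d]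
        intro i
        show n i ≤ Λ.d q i + (m + n - m) i
        simp only [Pi.sub_apply, Pi.add_apply]
        omega
      have h1 : Λ.s (Λ.pre (Λ.comp q (x.seg m (m + n) hmn) ht) n hdt) ∈ H := by
        apply hall
        · rw [Λ.r_pre, Λ.r_comp, hrq]
        · exact Λ.d_pre _ _ _
      apply h1 (m + n) (Λ.suf (Λ.comp q (x.seg m (m + n) hmn) ht) n hdt)
        (Λ.s_pre_eq_r_suf _ _ _).symm
      rw [Λ.s_suf, Λ.s_comp, x.seg_s]
    set J : Set (Tal Λ hfin) :=
      {t | ∃ b : TalF Λ, (∀ q ∈ b.support, q.1 ∈ H) ∧ t = tmk Λ hfin b} with hJdef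
    have hScond : ∀ (w : Λ.V) (i : Fin k),
        w ∈ Hᶜ ↔ ∃ p : Λ.P, Λ.r p = w ∧ Λ.d p = Pi.single i 1 ∧ Λ.s p ∈ Hᶜ := by
      intro w i
      constructor
      · intro hw
        by_contra hc
        push_neg at hc
        refine hw (hsat w (Pi.single i 1) (fun p hp1 hp2 => ?_))
        have := hc p hp1 hp2
        simpa using this
      · rintro ⟨p, hr, _, hs⟩ hw
        exact hs (hher p (by rw [hr]; exact hw))
    have hcompl : ∀ c : TalF Λ,
        (∀ q ∈ c.support, q.1 ∈ H) ↔ ¬ (∃ q ∈ c.support, q.1 ∈ Hᶜ) := by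
      intro c
      constructor
      · rintro h ⟨q, hq, hqc⟩
        exact hqc (h q hq)
      · intro h q hq
        by_contra hcq
        exact h ⟨q, hq, hcq⟩
    have hinv : ∀ {a b : TalF Λ}, tmk Λ hfin a = tmk Λ hfin b →
        ((∀ q ∈ a.support, q.1 ∈ H) ↔ (∀ q ∈ b.support, q.1 ∈ H)) := by
      intro a b hab
      rw [hcompl, hcompl]
      exact not_congr (talcon_supp_iff Λ hfin Hᶜ hScond ((tmk_eq_iff Λ hfin).1 hab))
    have hJideal : IsOrderIdeal Λ hfin J := by
      refine ⟨⟨0, by simp, (tmk_zero Λ hfin).symm⟩, ?_, ?_, ?_⟩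
      · rintro a b ⟨ba, hba, rfl⟩ ⟨bb, hbb, rfl⟩
        refine ⟨ba + bb, ?_, (tmk_add Λ hfin _ _).symm⟩
        intro q hq
        rcases Finset.mem_union.1 (Finsupp.support_add hq) with h | h
        · exact hba q h
        · exact hbb q h
      · rintro a b ⟨c, hc, he⟩
        obtain ⟨a0, rfl⟩ := tmk_surjective Λ hfin a
        obtain ⟨b0, rfl⟩ := tmk_surjective Λ hfin b
        have he' : tmk Λ hfin (a0 + b0) = tmk Λ hfin c := by
          rw [tmk_add]; exact he
        have hall := (hinv he').2 hc
        refine ⟨a0, fun q hq => hall q ?_, rfl⟩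
        rw [Finsupp.mem_support_iff] at hq ⊢
        rw [Finsupp.add_apply]
        omega
      · rintro p a ⟨c, hc, he⟩
        have hall := (hinv he).2 hc
        refine ⟨shiftF Λ p a, ?_, rfl⟩
        intro q hq
        have hsub := Finsupp.mapDomain_support hq
        obtain ⟨q0, hq0, hq0e⟩ := Finset.mem_image.1 hsub
        have : q.1 = q0.1 := by rw [← hq0e]
        rw [this]
        exact hall q0 hq0
    have h1 : tau Λ hfin v 0 ∈ J := by
      refine ⟨Finsupp.single (v, 0) 1, ?_, rfl⟩
      intro q hq
      rw [Finsupp.support_single_ne_zero _ one_ne_zero, Finset.mem_singleton] at hq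
      rw [hq]
      exact hvH
    have h2 : tau Λ hfin (x.vert 0) 0 ∉ J := by
      rintro ⟨c, hc, he⟩
      have hall := (hinv he).2 hc
      have hmem : (x.vert 0, (0 : Fin k → ℤ)) ∈ (Finsupp.single (x.vert 0, (0:Fin k → ℤ)) (1:ℕ)).support := by
        rw [Finsupp.support_single_ne_zero _ one_ne_zero]
        exact Finset.mem_singleton_self _
      exact hx0 (hall _ hmem)
    rcases hsimp J hJideal with h | h
    · rw [h, Set.mem_singleton_iff] at h1
      exact tau_ne_zero Λ hfin hns v 0 h1
    · exact h2 (h.symm ▸ Set.mem_univ _)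
end

section
/- Let Λ be a row-finite k-graph (with no sources) containing a periodic pair (α, β): distinct paths with s(α) = s(β) such that for every η with r(η) = s(α), the set Λ^min(αη, βη) is nonempty. Then the talented monoid T_Λ contains a nonzero periodic element, i.e., some 0 ≠ a ∈ T_Λ and 0 ≠ p ∈ ℤ^k with ᵖa = a. Equivalently, if ℤ^k acts freely on T_Λ then Λ is aperiodic in the sense of Lewin–Sims. -/
namespace KGraph

/-- `Λ^{min}(l, m)`: pairs `(ρ, σ)` with `lρ = mσ` and `d(lρ) = d(l) ∨ d(m)`. -/
def MinExt (Λ : KGraph k) (l m : Λ.P) : Set (Λ.P × Λ.P) :=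
  {rs | ∃ (h1 : Λ.s l = Λ.r rs.1) (h2 : Λ.s m = Λ.r rs.2),
    Λ.comp l rs.1 h1 = Λ.comp m rs.2 h2 ∧
    Λ.d (Λ.comp l rs.1 h1) = Λ.d l ⊔ Λ.d m}

/-- A periodic pair: distinct paths `α ≠ β` with `s(α) = s(β)` such that
`Λ^{min}(αη, βη) ≠ ∅` for every `η` with `r(η) = s(α)`. -/
def IsPeriodicPair (Λ : KGraph k) (α β : Λ.P) : Prop :=
  α ≠ β ∧ Λ.s α = Λ.s β ∧
  ∀ (η : Λ.P) (h1 : Λ.s α = Λ.r η) (h2 : Λ.s β = Λ.r η),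
    (MinExt Λ (Λ.comp α η h1) (Λ.comp β η h2)).Nonempty

end KGraph

namespace KGraph

variable {k : ℕ}

/-- Cast a multidegree to `ℤᵏ`. -/
def zc {k : ℕ} (N : Fin k → ℕ) : Fin k → ℤ := fun j => (N j : ℤ)

lemma zc_single (i : Fin k) : zc (Pi.single i 1) = Pi.single i (1 : ℤ) := by
  funext j
  by_cases h : j = i <;> simp [zc, Pi.single_apply, h]

lemma zc_add (M N : Fin k → ℕ) : zc (M + N) = zc M + zc N := by
  funext j; simp [zc]

lemma deg_zero (Λ : KGraph k) (p : Λ.P) (h : Λ.d p = 0) : p = Λ.ident (Λ.r p) := by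
  obtain ⟨qt, _, huniq⟩ := Λ.factor p 0 0 (by simpa using h)
  have e1 : (Λ.ident (Λ.r p), p) = qt := by
    refine huniq _ ⟨by rw [Λ.s_ident], ?_, Λ.d_ident _, h⟩
    exact Λ.ident_comp p _
  have e2 : (p, Λ.ident (Λ.s p)) = qt := by
    refine huniq _ ⟨(Λ.r_ident _).symm, ?_, h, Λ.d_ident _⟩
    exact Λ.comp_ident p _
  have := e1.trans e2.symm
  exact (congrArg Prod.fst this).symm

lemma comp_deg_zero (Λ : KGraph k) {p q : Λ.P} (h : Λ.s p = Λ.r q) (hq : Λ.d q = 0) :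
    Λ.comp p q h = p := by
  have e : q = Λ.ident (Λ.s p) := by rw [deg_zero Λ q hq, ← h]
  subst e
  exact Λ.comp_ident p h

lemma comp_congr (Λ : KGraph k) {p q q' : Λ.P} (e : q = q') (hq : Λ.s p = Λ.r q) :
    Λ.comp p q hq = Λ.comp p q' (e ▸ hq) := by subst e; rfl

lemma comp_left_cancel (Λ : KGraph k) {p a b : Λ.P} (h1 : Λ.s p = Λ.r a) (h2 : Λ.s p = Λ.r b)
    (hd : Λ.d a = Λ.d b) (h : Λ.comp p a h1 = Λ.comp p b h2) : a = b := by
  obtain ⟨qt, _, huniq⟩ := Λ.factor (Λ.comp p a h1) (Λ.d p) (Λ.d a) (Λ.d_comp p a h1)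
  have e1 : (p, a) = qt := huniq _ ⟨h1, rfl, rfl, rfl⟩
  have e2 : (p, b) = qt := huniq _ ⟨h2, h.symm, rfl, hd.symm⟩
  exact congrArg Prod.snd (e1.trans e2.symm)

lemma toFinset_zero (Λ : KGraph k) (hfin : Λ.RowFinite) (v : Λ.V) :
    (hfin v 0).toFinset = {Λ.ident v} := by
  ext p
  simp only [Set.Finite.mem_toFinset, pathsSet, Set.mem_setOf_eq, Finset.mem_singleton]
  constructor
  · rintro ⟨h1, h2⟩; rw [deg_zero Λ p h2, h1]
  · rintro rfl; exact ⟨Λ.r_ident v, Λ.d_ident v⟩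

end KGraph
namespace KGraph

variable {k : ℕ}

lemma mem_pathsFinset {Λ : KGraph k} {hfin : Λ.RowFinite} {v : Λ.V} {n : Fin k → ℕ} {p : Λ.P} :
    p ∈ (hfin v n).toFinset ↔ Λ.r p = v ∧ Λ.d p = n := by
  simp [Set.Finite.mem_toFinset, pathsSet]

lemma factor_eta (Λ : KGraph k) {m n : Fin k → ℕ} {p q t : Λ.P} (h : Λ.s q = Λ.r t)
    (hc : Λ.comp q t h = p) (h1 : Λ.d q = m) (h2 : Λ.d t = n) (hd : Λ.d p = m + n) :
    (Λ.factor p m n hd).choose = (q, t) :=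
  ((Λ.factor p m n hd).choose_spec.2 (q, t) ⟨h, hc, h1, h2⟩).symm

lemma sum_split (Λ : KGraph k) (hfin : Λ.RowFinite) (v : Λ.V) (N' : Fin k → ℕ) (io : Fin k)
    (c : Fin k → ℤ) :
    ∑ p ∈ (hfin v (N' + Pi.single io 1)).toFinset, Finsupp.single (Λ.s p, c) (1 : ℕ)
      = ∑ μ ∈ (hfin v N').toFinset, ∑ a ∈ (hfin (Λ.s μ) (Pi.single io 1)).toFinset,
          Finsupp.single (Λ.s a, c) 1 := by
  rw [← Finset.sum_sigma ((hfin v N').toFinset)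
      (fun μ => (hfin (Λ.s μ) (Pi.single io 1)).toFinset)
      (fun x => Finsupp.single (Λ.s x.2, c) (1 : ℕ))]
  refine Finset.sum_bij'
    (fun p hp => ⟨(Λ.factor p N' (Pi.single io 1) (mem_pathsFinset.mp hp).2).choose.1,
       (Λ.factor p N' (Pi.single io 1) (mem_pathsFinset.mp hp).2).choose.2⟩)
    (fun x hx => Λ.comp x.1 x.2
        ((mem_pathsFinset.mp (Finset.mem_sigma.mp hx).2).1).symm)
    ?_ ?_ ?_ ?_ ?_
  · -- hi : image in sigma finset
    intro p hp
    obtain ⟨h, hcomp, hd1, hd2⟩ :=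
      (Λ.factor p N' (Pi.single io 1) (mem_pathsFinset.mp hp).2).choose_spec.1
    rw [Finset.mem_sigma]
    constructor
    · rw [mem_pathsFinset]
      refine ⟨?_, hd1⟩
      rw [← Λ.r_comp _ _ h, hcomp]; exact (mem_pathsFinset.mp hp).1
    · rw [mem_pathsFinset]
      exact ⟨h.symm, hd2⟩
  · -- hj : comp lands in lhs finset
    intro x hx
    rw [mem_pathsFinset, Λ.r_comp, Λ.d_comp]
    obtain ⟨h1, h2⟩ := Finset.mem_sigma.mp hx
    rw [(mem_pathsFinset.mp h1).1, (mem_pathsFinset.mp h1).2, (mem_pathsFinset.mp h2).2]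
    exact ⟨rfl, rfl⟩
  · -- left_inv : comp of factor = p
    intro p hp
    obtain ⟨h, hcomp, hd1, hd2⟩ :=
      (Λ.factor p N' (Pi.single io 1) (mem_pathsFinset.mp hp).2).choose_spec.1
    exact hcomp
  · -- right_inv
    intro x hx
    obtain ⟨h1, h2⟩ := Finset.mem_sigma.mp hx
    beta_reduce
    rw [factor_eta Λ ((mem_pathsFinset.mp h2).1).symm rfl
      (mem_pathsFinset.mp h1).2 (mem_pathsFinset.mp h2).2]
    rw [Λ.d_comp, (mem_pathsFinset.mp h1).2, (mem_pathsFinset.mp h2).2]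
  · -- summand equality
    intro p hp
    obtain ⟨h, hcomp, hd1, hd2⟩ :=
      (Λ.factor p N' (Pi.single io 1) (mem_pathsFinset.mp hp).2).choose_spec.1
    have : Λ.s p = Λ.s (Λ.factor p N' (Pi.single io 1) (mem_pathsFinset.mp hp).2).choose.2 := by
      conv_lhs => rw [← hcomp]
      exact Λ.s_comp _ _ _
    exact congrArg (fun w => Finsupp.single (w, c) (1 : ℕ)) this

end KGraph
namespace KGraph

variable {k : ℕ}

lemma tmk_sum (Λ : KGraph k) (hfin : Λ.RowFinite) {γ : Type*} (s : Finset γ) (f : γ → TalF Λ) :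
    tmk Λ hfin (∑ x ∈ s, f x) = ∑ x ∈ s, tmk Λ hfin (f x) :=
  map_sum (TalCon Λ hfin).mk' f s

lemma tmk_rel (Λ : KGraph k) (hfin : Λ.RowFinite) (v : Λ.V) (n : Fin k → ℤ) (io : Fin k) :
    tmk Λ hfin (Finsupp.single (v, n) 1) =
      tmk Λ hfin (∑ p ∈ (hfin v (Pi.single io 1)).toFinset,
        Finsupp.single (Λ.s p, n + Pi.single io 1) 1) := by
  have : TalCon Λ hfin (Finsupp.single (v, n) 1)
      (∑ p ∈ (hfin v (Pi.single io 1)).toFinset,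
        Finsupp.single (Λ.s p, n + Pi.single io 1) 1) :=
    AddConGen.Rel.of _ _ ⟨v, n, io, rfl, rfl⟩
  exact (AddCon.eq _).mpr this

lemma expand (Λ : KGraph k) (hfin : Λ.RowFinite) :
    ∀ (M : ℕ) (N : Fin k → ℕ), (∑ j, N j) = M → ∀ (v : Λ.V) (n : Fin k → ℤ),
    tmk Λ hfin (Finsupp.single (v, n) 1) =
      tmk Λ hfin (∑ p ∈ (hfin v N).toFinset, Finsupp.single (Λ.s p, n + zc N) 1) := by
  intro M
  induction M with
  | zero =>
    intro N hN v n
    have hN0 : N = 0 := by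
      funext j
      have := (Finset.sum_eq_zero_iff.mp hN) j (Finset.mem_univ j)
      simpa using this
    subst hN0
    rw [toFinset_zero Λ hfin v, Finset.sum_singleton, Λ.s_ident]
    have : n + zc 0 = n := by funext j; simp [zc]
    rw [this]
  | succ M ih =>
    intro N hN v n
    have hex : ∃ io : Fin k, 0 < N io := by
      by_contra hc
      push_neg at hc
      have : ∑ j, N j = 0 := Finset.sum_eq_zero (fun j _ => Nat.le_zero.mp (hc j))
      omega
    obtain ⟨io, hio⟩ := hex
    set N' : Fin k → ℕ := N - Pi.single io 1 with hN'
    have hsplit : N = N' + Pi.single io 1 := by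
      funext j
      by_cases h : j = io <;>
        simp [hN', Pi.single_apply, h, Pi.sub_apply] <;> try omega
    have hsum' : (∑ j, N' j) = M := by
      have h1 : ∑ j, N j = (∑ j, N' j) + ∑ j, Pi.single io (1:ℕ) j := by
        rw [← Finset.sum_add_distrib]
        exact Finset.sum_congr rfl (fun j _ => by rw [hsplit]; rfl)
      have h2 : ∑ j, Pi.single io (1:ℕ) j = 1 := by
        simp [Pi.single_apply]
      omega
    rw [ih N' hsum' v n, tmk_sum, hsplit]
    have hpos : ∀ μ : Λ.P, (n + zc N') + Pi.single io 1 = n + zc (N' + Pi.single io 1) := by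
      intro μ
      rw [zc_add, zc_single, add_assoc]
    calc ∑ μ ∈ (hfin v N').toFinset, tmk Λ hfin (Finsupp.single (Λ.s μ, n + zc N') 1)
        = ∑ μ ∈ (hfin v N').toFinset, tmk Λ hfin
            (∑ a ∈ (hfin (Λ.s μ) (Pi.single io 1)).toFinset,
              Finsupp.single (Λ.s a, (n + zc N') + Pi.single io 1) 1) :=
          Finset.sum_congr rfl (fun μ _ => tmk_rel Λ hfin (Λ.s μ) (n + zc N') io)
      _ = tmk Λ hfin (∑ μ ∈ (hfin v N').toFinset,
            ∑ a ∈ (hfin (Λ.s μ) (Pi.single io 1)).toFinset,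
              Finsupp.single (Λ.s a, (n + zc N') + Pi.single io 1) 1) :=
          (tmk_sum Λ hfin _ _).symm
      _ = tmk Λ hfin (∑ p ∈ (hfin v (N' + Pi.single io 1)).toFinset,
            Finsupp.single (Λ.s p, (n + zc N') + Pi.single io 1) 1) := by
          rw [sum_split Λ hfin v N' io]
      _ = tmk Λ hfin (∑ p ∈ (hfin v (N' + Pi.single io 1)).toFinset,
            Finsupp.single (Λ.s p, n + zc (N' + Pi.single io 1)) 1) := by
          rw [hpos (Λ.ident v)]

lemma expand' (Λ : KGraph k) (hfin : Λ.RowFinite) (N : Fin k → ℕ) (v : Λ.V) (n : Fin k → ℤ) :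
    tmk Λ hfin (Finsupp.single (v, n) 1) =
      tmk Λ hfin (∑ p ∈ (hfin v N).toFinset, Finsupp.single (Λ.s p, n + zc N) 1) :=
  expand Λ hfin (∑ j, N j) N rfl v n

end KGraph
namespace KGraph

variable {k : ℕ}

lemma fadd_zero {Λ : KGraph k} {a b : TalF Λ} : a + b = 0 ↔ a = 0 ∧ b = 0 := by
  constructor
  · intro h
    constructor <;> ext q <;>
      · have := DFunLike.congr_fun h q
        simp only [Finsupp.add_apply, Finsupp.coe_zero, Pi.zero_apply] at this ⊢
        omega
  · rintro ⟨rfl, rfl⟩; simp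

lemma rel_zero_iff (Λ : KGraph k) (hfin : Λ.RowFinite) (hns : Λ.NoSources) {a b : TalF Λ}
    (h : AddConGen.Rel (TalRel Λ hfin) a b) : a = 0 ↔ b = 0 := by
  induction h with
  | of x y hxy =>
    obtain ⟨v, n, io, rfl, rfl⟩ := hxy
    constructor
    · intro h
      exact absurd (Finsupp.single_eq_zero.mp h) one_ne_zero
    · intro h
      exfalso
      obtain ⟨p0, hp0⟩ := hns v (Pi.single io 1)
      have hp0' : p0 ∈ (hfin v (Pi.single io 1)).toFinset := mem_pathsFinset.mpr hp0
      have := DFunLike.congr_fun h (Λ.s p0, n + Pi.single io 1)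
      rw [Finsupp.finset_sum_apply] at this
      have hz := Finset.sum_eq_zero_iff.mp this p0 hp0'
      simp at hz
  | refl x => exact Iff.rfl
  | symm _ ih => exact ih.symm
  | trans _ _ ih1 ih2 => exact ih1.trans ih2
  | add _ _ ih1 ih2 =>
    rw [fadd_zero, fadd_zero, ih1, ih2]

lemma tmk_single_ne_zero (Λ : KGraph k) (hfin : Λ.RowFinite) (hns : Λ.NoSources)
    (v : Λ.V) (n : Fin k → ℤ) : tmk Λ hfin (Finsupp.single (v, n) 1) ≠ 0 := by
  intro h
  have h0 : tmk Λ hfin (Finsupp.single (v, n) 1) = tmk Λ hfin 0 := by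
    rw [h]; exact (map_zero (TalCon Λ hfin).mk').symm
  have hc : TalCon Λ hfin (Finsupp.single (v, n) 1) 0 := (AddCon.eq _).mp h0
  have : (Finsupp.single (v, n) (1:ℕ) = 0) ↔ ((0 : TalF Λ) = 0) :=
    rel_zero_iff Λ hfin hns hc
  exact one_ne_zero (Finsupp.single_eq_zero.mp (this.mpr rfl))

end KGraph
namespace KGraph

variable {k : ℕ}

lemma periodic_symm {Λ : KGraph k} {α β : Λ.P} (hper : IsPeriodicPair Λ α β) :
    IsPeriodicPair Λ β α := by
  obtain ⟨hne, hs, hmin⟩ := hper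
  refine ⟨hne.symm, hs.symm, ?_⟩
  intro η h1 h2
  obtain ⟨⟨ρ, σ⟩, hρ, hσ, heq, hdeg⟩ := hmin η h2 h1
  exact ⟨(σ, ρ), hσ, hρ, heq.symm, by rw [← heq, hdeg, sup_comm]⟩

lemma key (Λ : KGraph k) {α β : Λ.P} (hper : IsPeriodicPair Λ α β)
    (lam : Λ.P) (hr : Λ.r lam = Λ.s α)
    (hd : Λ.d lam = fun j => max (Λ.d α j) (Λ.d β j) - Λ.d α j) :
    ∃ z : Λ.P, Λ.r z = Λ.s α ∧
      Λ.d z = (fun j => max (Λ.d α j) (Λ.d β j) - Λ.d β j) ∧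
      Λ.s z = Λ.s lam ∧
      ∃ (h1 : Λ.s β = Λ.r z) (h2 : Λ.s α = Λ.r lam), Λ.comp β z h1 = Λ.comp α lam h2 := by
  obtain ⟨hne, hs, hmin⟩ := hper
  have h1 : Λ.s α = Λ.r lam := hr.symm
  have h2 : Λ.s β = Λ.r lam := hs ▸ h1
  obtain ⟨⟨ρ, σ⟩, hρ, hσ, heq, hdeg⟩ := hmin lam h1 h2
  -- degrees
  have dαl : Λ.d (Λ.comp α lam h1) = Λ.d α + Λ.d lam := Λ.d_comp _ _ _
  have dβl : Λ.d (Λ.comp β lam h2) = Λ.d β + Λ.d lam := Λ.d_comp _ _ _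
  have dρ : Λ.d ρ = Λ.d lam := by
    funext j
    have e1 := congrFun hdeg j
    rw [Λ.d_comp] at e1
    have e2 := congrFun dαl j
    have e3 := congrFun dβl j
    have e4 := congrFun hd j
    simp only [Pi.add_apply, Pi.sup_apply] at e1 e2 e3 e4 ⊢
    omega
  have dσ : Λ.d σ = fun j => max (Λ.d α j) (Λ.d β j) - Λ.d β j := by
    funext j
    have e1 := congrFun hdeg j
    rw [heq, Λ.d_comp] at e1
    have e2 := congrFun dαl j
    have e3 := congrFun dβl j
    have e4 := congrFun hd j
    simp only [Pi.add_apply, Pi.sup_apply] at e1 e2 e3 e4 ⊢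
    omega
  -- factor lam·σ
  have hσ' : Λ.s lam = Λ.r σ := (Λ.s_comp β lam h2) ▸ hσ
  have hdls : Λ.d (Λ.comp lam σ hσ') =
      (fun j => max (Λ.d α j) (Λ.d β j) - Λ.d β j) +
      (fun j => max (Λ.d α j) (Λ.d β j) - Λ.d α j) := by
    funext j
    rw [Λ.d_comp]
    have e4 := congrFun hd j
    have e5 := congrFun dσ j
    simp only [Pi.add_apply] at e4 e5 ⊢
    omega
  obtain ⟨⟨z, t⟩, ⟨hzt, hcomp, hdz, hdt⟩, _⟩ :=
    Λ.factor (Λ.comp lam σ hσ') _ _ hdls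
  -- τ and its two factorizations
  have hrz : Λ.r z = Λ.s α := by
    have : Λ.r (Λ.comp z t hzt) = Λ.r z := Λ.r_comp _ _ _
    rw [hcomp, Λ.r_comp] at this
    rw [← this, hr]
  have h1z : Λ.s β = Λ.r z := by rw [hrz]; exact hs.symm
  -- chain: comp (comp β z) t = comp (comp α lam) ρ
  have hβz : Λ.s (Λ.comp β z h1z) = Λ.r t := by rw [Λ.s_comp]; exact hzt
  have chain : Λ.comp (Λ.comp β z h1z) t hβz = Λ.comp (Λ.comp α lam h1) ρ hρ := by
    have a1 : Λ.comp (Λ.comp β z h1z) t hβz = Λ.comp β (Λ.comp z t hzt)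
        (by rw [Λ.r_comp]; exact h1z) := by
      exact Λ.comp_assoc β z t h1z hzt hβz (by rw [Λ.r_comp]; exact h1z)
    have a2 : Λ.comp β (Λ.comp z t hzt) (by rw [Λ.r_comp]; exact h1z)
        = Λ.comp β (Λ.comp lam σ hσ') (by rw [Λ.r_comp]; exact h2) := by
      exact comp_congr Λ hcomp _
    have a3 : Λ.comp β (Λ.comp lam σ hσ') (by rw [Λ.r_comp]; exact h2)
        = Λ.comp (Λ.comp β lam h2) σ hσ := by
      exact (Λ.comp_assoc β lam σ h2 hσ' hσ _).symm
    rw [a1, a2, a3, ← heq]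
  -- uniqueness of factorization of τ at (max, hα)
  have hdτ : Λ.d (Λ.comp (Λ.comp α lam h1) ρ hρ) =
      (fun j => max (Λ.d α j) (Λ.d β j)) + (fun j => max (Λ.d α j) (Λ.d β j) - Λ.d α j) := by
    funext j
    rw [Λ.d_comp, Λ.d_comp]
    have e4 := congrFun hd j
    have e5 := congrFun dρ j
    simp only [Pi.add_apply] at e4 e5 ⊢
    omega
  obtain ⟨qt, _, huniq⟩ := Λ.factor (Λ.comp (Λ.comp α lam h1) ρ hρ) _ _ hdτ
  have e1 : (Λ.comp α lam h1, ρ) = qt := by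
    refine huniq _ ⟨hρ, rfl, ?_, dρ.trans hd⟩
    funext j
    rw [Λ.d_comp]
    have e4 := congrFun hd j
    simp only [Pi.add_apply] at e4 ⊢
    omega
  have e2 : (Λ.comp β z h1z, t) = qt := by
    refine huniq _ ⟨hβz, chain, ?_, hdt⟩
    funext j
    rw [Λ.d_comp]
    have e5 := congrFun hdz j
    simp only [Pi.add_apply] at e5 ⊢
    omega
  have efst : Λ.comp β z h1z = Λ.comp α lam h1 :=
    (congrArg Prod.fst (e2.trans e1.symm))
  have hsz : Λ.s z = Λ.s lam := by
    have u1 : Λ.s (Λ.comp β z h1z) = Λ.s z := Λ.s_comp _ _ _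
    have u2 : Λ.s (Λ.comp α lam h1) = Λ.s lam := Λ.s_comp _ _ _
    rw [← u1, ← u2, efst]
  exact ⟨z, hrz, hdz, hsz, h1z, h1, efst⟩

end KGraph
namespace KGraph

variable {k : ℕ}

lemma deg_ne (Λ : KGraph k) {α β : Λ.P} (hper : IsPeriodicPair Λ α β) : Λ.d α ≠ Λ.d β := by
  intro hdd
  obtain ⟨hne, hs, hmin⟩ := hper
  have h1 : Λ.s α = Λ.r (Λ.ident (Λ.s α)) := (Λ.r_ident _).symm
  have h2 : Λ.s β = Λ.r (Λ.ident (Λ.s α)) := by rw [Λ.r_ident]; exact hs.symm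
  obtain ⟨⟨ρ, σ⟩, hρ, hσ, heq, hdeg⟩ := hmin (Λ.ident (Λ.s α)) h1 h2
  have hdη : Λ.d (Λ.ident (Λ.s α)) = 0 := Λ.d_ident _
  have dρ : Λ.d ρ = 0 := by
    funext j
    have e1 := congrFun hdeg j
    rw [Λ.d_comp] at e1
    have e2 := congrFun (Λ.d_comp α (Λ.ident (Λ.s α)) h1) j
    have e3 := congrFun (Λ.d_comp β (Λ.ident (Λ.s α)) h2) j
    have e4 := congrFun hdd j
    have e5 := congrFun hdη j
    simp only [Pi.add_apply, Pi.sup_apply, Pi.zero_apply] at e1 e2 e3 e4 e5 ⊢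
    omega
  have dσ : Λ.d σ = 0 := by
    funext j
    have e1 := congrFun hdeg j
    rw [heq, Λ.d_comp] at e1
    have e2 := congrFun (Λ.d_comp α (Λ.ident (Λ.s α)) h1) j
    have e3 := congrFun (Λ.d_comp β (Λ.ident (Λ.s α)) h2) j
    have e4 := congrFun hdd j
    have e5 := congrFun hdη j
    simp only [Pi.add_apply, Pi.sup_apply, Pi.zero_apply] at e1 e2 e3 e4 e5 ⊢
    omega
  apply hne
  calc α = Λ.comp α (Λ.ident (Λ.s α)) h1 := (comp_deg_zero Λ h1 hdη).symm
    _ = Λ.comp (Λ.comp α (Λ.ident (Λ.s α)) h1) ρ hρ := (comp_deg_zero Λ hρ dρ).symm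
    _ = Λ.comp (Λ.comp β (Λ.ident (Λ.s α)) h2) σ hσ := heq
    _ = Λ.comp β (Λ.ident (Λ.s α)) h2 := comp_deg_zero Λ hσ dσ
    _ = β := comp_deg_zero Λ h2 hdη

lemma key_inv (Λ : KGraph k) {α β : Λ.P} (hper : IsPeriodicPair Λ α β) (lam : Λ.P)
    (hr : Λ.r lam = Λ.s α) (hd : Λ.d lam = fun j => max (Λ.d α j) (Λ.d β j) - Λ.d α j)
    (hr2 : Λ.r (key Λ hper lam hr hd).choose = Λ.s β)
    (hd2 : Λ.d (key Λ hper lam hr hd).choose = fun j => max (Λ.d β j) (Λ.d α j) - Λ.d β j) :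
    (key Λ (periodic_symm hper) (key Λ hper lam hr hd).choose hr2 hd2).choose = lam := by
  obtain ⟨hrz, hdz, hsz, h1, h2, heqz⟩ := (key Λ hper lam hr hd).choose_spec
  obtain ⟨hrz', hdz', hsz', h1', h2', heqz'⟩ :=
    (key Λ (periodic_symm hper) (key Λ hper lam hr hd).choose hr2 hd2).choose_spec
  have hdd : Λ.d (key Λ (periodic_symm hper) (key Λ hper lam hr hd).choose hr2 hd2).choose
      = Λ.d lam := by
    rw [hdz', hd]
    funext j
    rw [Nat.max_comm]
  exact comp_left_cancel Λ h1' h2 hdd (heqz'.trans heqz)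

end KGraph
namespace KGraph

variable {k : ℕ}

lemma main1 (Λ : KGraph k) (hfin : Λ.RowFinite) (hns : Λ.NoSources)
    {α β : Λ.P} (hper : IsPeriodicPair Λ α β) :
    ∃ a : TalF Λ, tmk Λ hfin a ≠ 0 ∧
      ∃ p : Fin k → ℤ, p ≠ 0 ∧ tmk Λ hfin (shiftF Λ p a) = tmk Λ hfin a := by
  classical
  have hmn : Λ.d α ≠ Λ.d β := deg_ne Λ hper
  refine ⟨Finsupp.single (Λ.s α, 0) 1, tmk_single_ne_zero Λ hfin hns _ _,
    (fun j => ((max (Λ.d α j) (Λ.d β j) - Λ.d α j : ℕ) : ℤ)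
      - ((max (Λ.d α j) (Λ.d β j) - Λ.d β j : ℕ) : ℤ)), ?_, ?_⟩
  · -- p ≠ 0
    intro h0
    apply hmn
    funext j
    have := congrFun h0 j
    simp only [Pi.zero_apply] at this
    omega
  · have e1 : shiftF Λ (fun j => ((max (Λ.d α j) (Λ.d β j) - Λ.d α j : ℕ) : ℤ)
        - ((max (Λ.d α j) (Λ.d β j) - Λ.d β j : ℕ) : ℤ)) (Finsupp.single (Λ.s α, 0) 1)
        = Finsupp.single (Λ.s α, (0 : Fin k → ℤ) + (fun j => ((max (Λ.d α j) (Λ.d β j) - Λ.d α j : ℕ) : ℤ)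
        - ((max (Λ.d α j) (Λ.d β j) - Λ.d β j : ℕ) : ℤ))) 1 := Finsupp.mapDomain_single
    rw [e1,
      expand' Λ hfin (fun j => max (Λ.d α j) (Λ.d β j) - Λ.d β j) (Λ.s α) _,
      expand' Λ hfin (fun j => max (Λ.d α j) (Λ.d β j) - Λ.d α j) (Λ.s α) 0]
    have hcpos : ((0 : Fin k → ℤ) + (fun j => ((max (Λ.d α j) (Λ.d β j) - Λ.d α j : ℕ) : ℤ)
          - ((max (Λ.d α j) (Λ.d β j) - Λ.d β j : ℕ) : ℤ)))
          + zc (fun j => max (Λ.d α j) (Λ.d β j) - Λ.d β j)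
        = (0 : Fin k → ℤ) + zc (fun j => max (Λ.d α j) (Λ.d β j) - Λ.d α j) := by
      funext j
      simp only [Pi.add_apply, Pi.zero_apply, zc]
      ring
    rw [hcpos]
    have hsums : (∑ z ∈ (hfin (Λ.s α) (fun j => max (Λ.d α j) (Λ.d β j) - Λ.d β j)).toFinset,
          Finsupp.single (Λ.s z, (0 : Fin k → ℤ)
            + zc (fun j => max (Λ.d α j) (Λ.d β j) - Λ.d α j)) (1 : ℕ))
        = ∑ lam ∈ (hfin (Λ.s α) (fun j => max (Λ.d α j) (Λ.d β j) - Λ.d α j)).toFinset,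
          Finsupp.single (Λ.s lam, (0 : Fin k → ℤ)
            + zc (fun j => max (Λ.d α j) (Λ.d β j) - Λ.d α j)) 1 := by
      refine Finset.sum_bij'
        (fun z hz => (key Λ (periodic_symm hper) z
            ((mem_pathsFinset.mp hz).1.trans hper.2.1)
            ((mem_pathsFinset.mp hz).2.trans (by funext j; rw [Nat.max_comm]))).choose)
        (fun lam hlam => (key Λ hper lam (mem_pathsFinset.mp hlam).1
            (mem_pathsFinset.mp hlam).2).choose)
        ?_ ?_ ?_ ?_ ?_
      · intro z hz
        obtain ⟨hrz', hdz', hsz', h1', h2', heqz'⟩ := (key Λ (periodic_symm hper) z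
            ((mem_pathsFinset.mp hz).1.trans hper.2.1)
            ((mem_pathsFinset.mp hz).2.trans (by funext j; rw [Nat.max_comm]))).choose_spec
        rw [mem_pathsFinset]
        refine ⟨hrz'.trans hper.2.1.symm, hdz'.trans ?_⟩
        funext j; rw [Nat.max_comm]
      · intro lam hlam
        obtain ⟨hrz, hdz, hsz, h1, h2, heqz⟩ := (key Λ hper lam (mem_pathsFinset.mp hlam).1
            (mem_pathsFinset.mp hlam).2).choose_spec
        rw [mem_pathsFinset]
        exact ⟨hrz, hdz⟩
      · intro z hz
        obtain ⟨hrz', hdz', hsz', h1', h2', heqz'⟩ := (key Λ (periodic_symm hper) z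
            ((mem_pathsFinset.mp hz).1.trans hper.2.1)
            ((mem_pathsFinset.mp hz).2.trans (by funext j; rw [Nat.max_comm]))).choose_spec
        exact key_inv Λ (periodic_symm hper) z
          ((mem_pathsFinset.mp hz).1.trans hper.2.1)
          ((mem_pathsFinset.mp hz).2.trans (by funext j; rw [Nat.max_comm]))
          (hrz'.trans hper.2.1.symm)
          (hdz'.trans (by funext j; rw [Nat.max_comm]))
      · intro lam hlam
        obtain ⟨hrz, hdz, hsz, h1, h2, heqz⟩ := (key Λ hper lam (mem_pathsFinset.mp hlam).1
            (mem_pathsFinset.mp hlam).2).choose_spec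
        exact key_inv Λ hper lam (mem_pathsFinset.mp hlam).1 (mem_pathsFinset.mp hlam).2
          (hrz.trans hper.2.1)
          (hdz.trans (by funext j; rw [Nat.max_comm]))
      · intro z hz
        obtain ⟨hrz', hdz', hsz', h1', h2', heqz'⟩ := (key Λ (periodic_symm hper) z
            ((mem_pathsFinset.mp hz).1.trans hper.2.1)
            ((mem_pathsFinset.mp hz).2.trans (by funext j; rw [Nat.max_comm]))).choose_spec
        exact congrArg (fun w => Finsupp.single (w, (0 : Fin k → ℤ)
          + zc (fun j => max (Λ.d α j) (Λ.d β j) - Λ.d α j)) (1 : ℕ)) hsz'.symm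
    rw [hsums]

end KGraph
open KGraph in
/-- If a row-finite `k`-graph `Λ` (with no sources) contains a periodic pair, then
`T_Λ` contains a nonzero periodic element; equivalently, if `ℤᵏ` acts freely on
`T_Λ` then `Λ` is aperiodic in the sense of Lewin–Sims. -/
theorem stmt14 {k : ℕ} (Λ : KGraph k) (hfin : Λ.RowFinite) (hns : Λ.NoSources) :
    ((∃ α β : Λ.P, IsPeriodicPair Λ α β) →
      ∃ a : TalF Λ, tmk Λ hfin a ≠ 0 ∧
        ∃ p : Fin k → ℤ, p ≠ 0 ∧ tmk Λ hfin (shiftF Λ p a) = tmk Λ hfin a) ∧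
    ((∀ (a : TalF Λ) (p : Fin k → ℤ), p ≠ 0 →
        tmk Λ hfin (shiftF Λ p a) = tmk Λ hfin a → tmk Λ hfin a = 0) →
      ∀ α β : Λ.P, α ≠ β → Λ.s α = Λ.s β →
        ∃ (η : Λ.P) (h1 : Λ.s α = Λ.r η) (h2 : Λ.s β = Λ.r η),
          MinExt Λ (Λ.comp α η h1) (Λ.comp β η h2) = ∅) := by
  constructor
  · rintro ⟨α, β, hper⟩
    exact main1 Λ hfin hns hper
  · intro hfree α β hne hs
    by_contra hc
    push_neg at hc
    have hper : IsPeriodicPair Λ α β := by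
      refine ⟨hne, hs, ?_⟩
      intro η h1 h2
      exact hc η h1 h2
    obtain ⟨a, ha, p, hp, hsh⟩ := main1 Λ hfin hns hper
    exact ha (hfree a p hp hsh)
end
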